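/- arXiv:1911.02269 — 7 statements merged into one kernel-verified Lean document; each statement's English description precedes it below -/
import Mathlib

section
/- Let G be a compact Hausdorff topological group and let (H_m)_{m ∈ ℕ} be a countable family of closed subgroups of G whose union is all of G. Then there exists an index m such that H_m is an open subgroup of G; in particular, H_m has finite index in G. -/
/-- Let `G` be a compact Hausdorff topological group and let
`(H m)_{m ∈ ℕ}` be a countable family of closed subgroups of `G` whose union is
all of `G`.  Then some `H m` is an open subgroup of `G`; in particular it has
finite index in `G`. -/
theorem closed_subgroup_cover_exists_open
    {G : Type*} [Group G] [TopologicalSpace G] [IsTopologicalGroup G]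
    [CompactSpace G] [T2Space G]
    (H : ℕ → Subgroup G)
    (hclosed : ∀ m, IsClosed (H m : Set G))
    (hcover : ∀ g : G, ∃ m, g ∈ H m) :
    ∃ m, IsOpen (H m : Set G) ∧ (H m).FiniteIndex := by
  have hU : (⋃ m, (H m : Set G)) = Set.univ := by
    ext g; simpa using hcover g
  obtain ⟨m, hm⟩ := nonempty_interior_of_iUnion_of_closed hclosed hU
  obtain ⟨g, hg⟩ := hm
  have hopen : IsOpen (H m : Set G) :=
    Subgroup.isOpen_of_mem_nhds (H m) (mem_interior_iff_mem_nhds.1 hg)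
  have : Finite (G ⧸ H m) := Subgroup.quotient_finite_of_isOpen (H m) hopen
  exact ⟨m, hopen, Subgroup.finiteIndex_of_finite_quotient (H := H m)⟩
end

section
/- Let G be a compact Hausdorff topological group which is the union of a family (H_i)_{i ∈ I} of closed subgroups indexed by a countable set I, and assume the family is directed under inclusion, i.e. for all i, j ∈ I there exists k ∈ I with H_i ⊆ H_k and H_j ⊆ H_k. Then G = H_i for some i ∈ I. -/
/-- Let `G` be a compact Hausdorff topological group which is the
union of a countable family `(H i)_{i ∈ I}` of closed subgroups that is directed
under inclusion.  Then `G = H i` for some `i`. -/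
theorem directed_closed_subgroup_cover_eq_top
    {G : Type*} [Group G] [TopologicalSpace G] [IsTopologicalGroup G]
    [CompactSpace G] [T2Space G]
    {I : Type*} [Countable I]
    (H : I → Subgroup G)
    (hclosed : ∀ i, IsClosed (H i : Set G))
    (hdir : ∀ i j : I, ∃ k : I, H i ≤ H k ∧ H j ≤ H k)
    (hcover : ∀ g : G, ∃ i, g ∈ H i) :
    ∃ i, H i = ⊤ := by
  have hI : Nonempty I := ⟨(hcover 1).choose⟩
  -- Baire: some H i₀ has nonempty interior
  have hunion : (⋃ i, (H i : Set G)) = Set.univ := by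
    ext g; simpa using hcover g
  obtain ⟨i₀, x, hx⟩ : ∃ i, (interior (H i : Set G)).Nonempty :=
    nonempty_interior_of_iUnion_of_closed hclosed hunion
  -- H i₀ is open
  have hopen : IsOpen (H i₀ : Set G) :=
    Subgroup.isOpen_of_mem_nhds _ (mem_interior_iff_mem_nhds.1 hx)
  -- cosets of H i₀ form an open cover; compactness gives a finite subcover
  have hcov : Set.univ ⊆ ⋃ g : G, (fun x => g * x) '' (H i₀ : Set G) := by
    intro g _
    exact Set.mem_iUnion.2 ⟨g, 1, one_mem _, mul_one g⟩
  obtain ⟨s, hs⟩ := isCompact_univ.elim_finite_subcover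
    (fun g : G => (fun x => g * x) '' (H i₀ : Set G))
    (fun g => (Homeomorph.mulLeft g).isOpenMap _ hopen) hcov
  -- directedness over a finite set
  have hDir : Directed (· ≤ ·) H := hdir
  classical
  -- pick indices for each element of s
  choose f hf using fun g : G => hcover g
  obtain ⟨k, hk⟩ := hDir.finset_le (insert i₀ (s.image f))
  refine ⟨k, (Subgroup.eq_top_iff' _).2 fun g => ?_⟩
  have hg := hs (Set.mem_univ g)
  rcases Set.mem_iUnion₂.1 hg with ⟨c, hc, x, hxH, hcx⟩
  have hck : c ∈ H k := hk (f c) (Finset.mem_insert_of_mem (Finset.mem_image_of_mem f hc)) (hf c)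
  have hxk : x ∈ H k := hk i₀ (Finset.mem_insert_self _ _) hxH
  rw [← hcx]
  exact mul_mem hck hxk
end

section
/- Every compact subgroup of the multiplicative group Q̄_ℓ^× all of whose elements are roots of unity is finite. -/
section Aux

variable {K : Type*} [NormedField K] [IsUltrametricDist K]

/-- In an ultrametric normed field, `‖(1+u)^i - 1‖ ≤ ‖u‖` when `‖u‖ ≤ 1`. -/
lemma aux_pow_sub_one_le {u : K} (hu : ‖u‖ ≤ 1) : ∀ i : ℕ, ‖(1 + u) ^ i - 1‖ ≤ ‖u‖ := by
  intro i
  induction i with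
  | zero => simp
  | succ i ih =>
    have key : (1 + u) ^ (i + 1) - 1 = ((1 + u) ^ i - 1) * (1 + u) + u := by ring
    rw [key]
    refine le_trans (IsUltrametricDist.norm_add_le_max _ _) ?_
    have h1u : ‖1 + u‖ ≤ 1 := by
      refine le_trans (IsUltrametricDist.norm_add_le_max _ _) ?_
      simp [hu]
    have : ‖((1 + u) ^ i - 1) * (1 + u)‖ ≤ ‖u‖ := by
      rw [norm_mul]
      calc ‖(1 + u) ^ i - 1‖ * ‖1 + u‖ ≤ ‖u‖ * 1 :=
            mul_le_mul ih h1u (norm_nonneg _) (norm_nonneg _)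
        _ = ‖u‖ := mul_one _
    exact le_trans (max_le this le_rfl) le_rfl

/-- Core estimate: if `‖x - 1‖ < ‖(l : K)‖ ≤ 1` then `‖x^l - 1‖ = ‖(l:K)‖ * ‖x - 1‖`. -/
lemma aux_pow_l {l : ℕ} {x : K} (h : ‖x - 1‖ < ‖((l : ℕ) : K)‖)
    (hc1 : ‖((l : ℕ) : K)‖ ≤ 1) :
    ‖x ^ l - 1‖ = ‖((l : ℕ) : K)‖ * ‖x - 1‖ := by
  set u : K := x - 1 with hu
  have hx : x = 1 + u := by ring
  have hu1 : ‖u‖ ≤ 1 := le_of_lt (lt_of_lt_of_le h hc1)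
  have hgeom : (∑ i ∈ Finset.range l, x ^ i) * (x - 1) = x ^ l - 1 := geom_sum_mul x l
  have hsum : (∑ i ∈ Finset.range l, x ^ i) = ((l : ℕ) : K) + ∑ i ∈ Finset.range l, (x ^ i - 1) := by
    rw [Finset.sum_sub_distrib]
    simp
  have hrest : ‖∑ i ∈ Finset.range l, (x ^ i - 1)‖ ≤ ‖u‖ := by
    refine IsUltrametricDist.norm_sum_le_of_forall_le_of_nonneg (norm_nonneg u) ?_
    intro i _
    rw [hx]
    exact aux_pow_sub_one_le hu1 i
  have hne : ‖∑ i ∈ Finset.range l, (x ^ i - 1)‖ ≠ ‖((l : ℕ) : K)‖ :=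
    ne_of_lt (lt_of_le_of_lt hrest h)
  have hmain : ‖∑ i ∈ Finset.range l, x ^ i‖ = ‖((l : ℕ) : K)‖ := by
    rw [hsum]
    rw [IsUltrametricDist.norm_add_eq_max_of_norm_ne_norm (fun hh => hne hh.symm)]
    exact max_eq_left (le_of_lt (lt_of_le_of_lt hrest h))
  calc ‖x ^ l - 1‖ = ‖(∑ i ∈ Finset.range l, x ^ i) * (x - 1)‖ := by rw [hgeom]
    _ = ‖((l : ℕ) : K)‖ * ‖x - 1‖ := by rw [norm_mul, hmain]

/-- A root of unity close to `1` is `1`. -/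
lemma aux_root_of_unity_close {l : ℕ} {x : K} (hc1 : ‖((l : ℕ) : K)‖ < 1)
    (h : ‖x - 1‖ < ‖((l : ℕ) : K)‖) {n : ℕ} (hn : 0 < n) (hxn : x ^ n = 1) : x = 1 := by
  set c : ℝ := ‖((l : ℕ) : K)‖ with hc
  have hcpos : 0 < c := lt_of_le_of_lt (norm_nonneg _) h
  -- key iteration
  have key : ∀ k : ℕ, ‖x ^ l ^ k - 1‖ = c ^ k * ‖x - 1‖ := by
    intro k
    induction k with
    | zero => simp
    | succ k ih =>
      have hck : c ^ k ≤ 1 := pow_le_one₀ hcpos.le hc1.le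
      have hlt : ‖x ^ l ^ k - 1‖ < c := by
        rw [ih]
        calc c ^ k * ‖x - 1‖ ≤ 1 * ‖x - 1‖ :=
              mul_le_mul_of_nonneg_right hck (norm_nonneg _)
          _ = ‖x - 1‖ := one_mul _
          _ < c := h
      have := aux_pow_l (K := K) hlt hc1.le
      rw [← pow_mul, ← pow_succ] at this
      rw [this, ih]
      ring
  -- pigeonhole on `l ^ k % n`
  have hmaps : ∀ k ∈ Finset.range (n + 1), l ^ k % n ∈ Finset.range n := by
    intro k _
    exact Finset.mem_range.mpr (Nat.mod_lt _ hn)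
  obtain ⟨k1, hk1, k2, hk2, hne, heq⟩ :=
    Finset.exists_ne_map_eq_of_card_lt_of_maps_to
      (by simp [Finset.card_range]) hmaps
  -- wlog k1 < k2
  wlog hlt : k1 < k2 generalizing k1 k2
  · exact this k2 hk2 k1 hk1 hne.symm heq.symm (by omega)
  have hxeq : x ^ l ^ k1 = x ^ l ^ k2 := by
    rw [pow_eq_pow_mod (l ^ k1) hxn, pow_eq_pow_mod (l ^ k2) hxn, heq]
  by_contra hx1
  have hd : 0 < ‖x - 1‖ := norm_pos_iff.mpr (sub_ne_zero.mpr hx1)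
  have h1 : c ^ k1 * ‖x - 1‖ = c ^ k2 * ‖x - 1‖ := by
    rw [← key k1, ← key k2, hxeq]
  have h2 : c ^ k1 = c ^ k2 := mul_right_cancel₀ (ne_of_gt hd) h1
  have h3 : c ^ k2 < c ^ k1 := pow_lt_pow_right_of_lt_one₀ hcpos hc1 hlt
  exact absurd h2 (ne_of_gt h3)

end Aux

/-- Every compact subgroup of `Q̄_ℓ^×` all of whose elements are
roots of unity is finite.  Here `K` is an algebraic closure of `ℚ_ℓ`, viewed as a
normed field whose norm extends the `ℓ`-adic absolute value (this determines the
topology, such an extension being unique). -/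
theorem compact_subgroup_of_roots_of_unity_finite
    {l : ℕ} [Fact l.Prime]
    (K : Type*) [NormedField K] [Algebra ℚ_[l] K] [IsAlgClosure ℚ_[l] K]
    (hnorm : ∀ x : ℚ_[l], ‖algebraMap ℚ_[l] K x‖ = ‖x‖)
    (S : Subgroup Kˣ) (hS : IsCompact (S : Set Kˣ))
    (htors : ∀ x ∈ S, ∃ n : ℕ, 0 < n ∧ x ^ n = 1) :
    (S : Set Kˣ).Finite := by
  have hlprime : l.Prime := Fact.out
  have hl2 : 2 ≤ l := hlprime.two_le
  -- the norm on K is ultrametric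
  haveI : IsUltrametricDist K := by
    apply IsUltrametricDist.isUltrametricDist_of_forall_norm_natCast_le_one
    intro n
    have : ((n : ℕ) : K) = algebraMap ℚ_[l] K ((n : ℕ) : ℚ_[l]) := by
      rw [map_natCast]
    rw [this, hnorm]
    exact_mod_cast Padic.norm_int_le_one (n : ℤ)
  -- the norm of `l` in `K`
  have hcval : ‖((l : ℕ) : K)‖ = (l : ℝ)⁻¹ := by
    have : ((l : ℕ) : K) = algebraMap ℚ_[l] K ((l : ℕ) : ℚ_[l]) := by rw [map_natCast]
    rw [this, hnorm]
    exact Padic.norm_p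
  have hc1 : ‖((l : ℕ) : K)‖ < 1 := by
    rw [hcval]
    rw [inv_lt_one_iff₀]
    right
    exact_mod_cast hl2.trans_lt' one_lt_two
  have hcpos : 0 < ‖((l : ℕ) : K)‖ := by
    rw [hcval]
    positivity
  set c : ℝ := ‖((l : ℕ) : K)‖ with hcdef
  -- elements of S have norm 1
  have hnorm_one : ∀ x : Kˣ, x ∈ S → ‖(x : K)‖ = 1 := by
    intro x hx
    obtain ⟨n, hn, hxn⟩ := htors x hx
    have hpow : ‖(x : K)‖ ^ n = 1 := by
      rw [← norm_pow, ← Units.val_pow_eq_pow_val, hxn, Units.val_one, norm_one]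
    have h0 : (0 : ℝ) ≤ ‖(x : K)‖ := norm_nonneg _
    rcases pow_eq_one_iff_cases.mp hpow with h | h | h
    · omega
    · exact h
    · exfalso; rw [h.1] at h0; linarith
  -- separation: distinct elements of S are at distance ≥ c
  have hsep : ∀ x ∈ S, ∀ y ∈ S, x ≠ y → c ≤ ‖(x : K) - (y : K)‖ := by
    intro x hx y hy hxy
    by_contra hlt
    push_neg at hlt
    have hδmem : x * y⁻¹ ∈ S := S.mul_mem hx (S.inv_mem hy)
    set δ : Kˣ := x * y⁻¹ with hδ
    have hδne : δ ≠ 1 := by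
      intro hh
      apply hxy
      have := mul_inv_eq_one.mp hh
      exact this
    have hyval : ‖(y : K)‖ = 1 := hnorm_one y hy
    have hfact : (x : K) - (y : K) = ((δ : K) - 1) * (y : K) := by
      rw [hδ, Units.val_mul, sub_mul, mul_assoc, Units.inv_mul, mul_one, one_mul]
    have hδdist : ‖(δ : K) - 1‖ < c := by
      have : ‖(x : K) - (y : K)‖ = ‖(δ : K) - 1‖ * ‖(y : K)‖ := by
        rw [hfact, norm_mul]
      rw [this, hyval, mul_one] at hlt
      exact hlt
    obtain ⟨n, hn, hδn⟩ := htors δ hδmem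
    have hδval : (δ : K) ^ n = 1 := by
      rw [← Units.val_pow_eq_pow_val, hδn, Units.val_one]
    have := aux_root_of_unity_close (K := K) hc1 hδdist hn hδval
    exact hδne (Units.ext this)
  -- the image of S in K is compact
  have hT : IsCompact ((↑) '' (S : Set Kˣ) : Set K) :=
    hS.image Units.continuous_val
  -- the image is finite, using total boundedness and uniform separation
  obtain ⟨t, htfin, htcover⟩ := (Metric.totallyBounded_iff.mp hT.totallyBounded) (c / 2)
    (by positivity)
  have hTfin : ((↑) '' (S : Set Kˣ) : Set K).Finite := by
    have hsub : ((↑) '' (S : Set Kˣ) : Set K) ⊆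
        ⋃ y ∈ t, (((↑) '' (S : Set Kˣ) : Set K) ∩ Metric.ball y (c / 2)) := by
      intro z hz
      have := htcover hz
      simp only [Set.mem_iUnion] at this ⊢
      obtain ⟨y, hy, hball⟩ := this
      exact ⟨y, hy, hz, hball⟩
    refine Set.Finite.subset (Set.Finite.biUnion htfin fun y _ => ?_) hsub
    refine Set.Subsingleton.finite ?_
    intro a ha b hb
    obtain ⟨⟨xa, hxa, rfl⟩, hba⟩ := ha
    obtain ⟨⟨xb, hxb, rfl⟩, hbb⟩ := hb
    by_contra hne
    have hxab : xa ≠ xb := fun h => hne (by rw [h])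
    have h1 := hsep xa hxa xb hxb hxab
    have h2 : dist (xa : K) (xb : K) < c := by
      calc dist (xa : K) (xb : K) ≤ dist (xa : K) y + dist y (xb : K) := dist_triangle _ _ _
        _ < c / 2 + c / 2 := by
            have hda := Metric.mem_ball.mp hba
            have hdb := Metric.mem_ball.mp hbb
            rw [dist_comm] at hdb
            exact add_lt_add hda hdb
        _ = c := by ring
    rw [dist_eq_norm] at h2
    linarith
  exact Set.Finite.of_finite_image hTfin (fun a _ b _ h => Units.ext h)
end

section
/- For every compact Hausdorff abelian topological group G, the group Θ_G is uniquely divisible: it is torsion-free, and for every χ ∈ Θ_G and every integer n ≥ 1 there exists ξ ∈ Θ_G with ξ^n = χ. Equivalently, the canonical map Θ_G → Θ_G ⊗_ℤ ℚ is an isomorphism. -/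
/-! Setup: `K` plays the role of `Q̄_ℓ`: an algebraic closure of `ℚ_ℓ`, viewed as a
normed field whose norm extends the `ℓ`-adic absolute value (this determines the
topology, such an extension being unique).  `mu K` is the group `μ` of roots of
unity in `Kˣ`; for a subextension `E`, `unitBall K E` is the group `O_E^×`
(elements of `E` of absolute value one) and `muSub K E` is `μ_E`, so that
`↥(unitBall K E) ⧸ muSub K E` is `O_E^×/μ_E` with its quotient topology.
`IsTheta` expresses membership in `Θ_G`: a homomorphism `G → Kˣ/μ` factoring as a
continuous homomorphism `G → O_E^×/μ_E` followed by the natural inclusion, for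
some finite subextension `E`. -/

/-- The group `μ` of roots of unity of `K`, as a subgroup of `Kˣ`. -/
def mu (K : Type*) [Field K] : Subgroup Kˣ where
  carrier := {x | ∃ n : ℕ, 0 < n ∧ x ^ n = 1}
  one_mem' := ⟨1, Nat.one_pos, one_pow 1⟩
  mul_mem' := by
    rintro a b ⟨m, hm, ha⟩ ⟨n, hn, hb⟩
    refine ⟨m * n, Nat.mul_pos hm hn, ?_⟩
    rw [mul_pow, pow_mul, ha, one_pow, one_mul, pow_mul', hb, one_pow]
  inv_mem' := by
    rintro a ⟨n, hn, ha⟩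
    exact ⟨n, hn, by rw [inv_pow, ha, inv_one]⟩

/-- `O_E^×`, the unit group of the ring of integers `O_E = E ∩ Z̄_ℓ` of a
subextension `E`, realized as the subgroup of `Kˣ` of elements of `E` of
absolute value `1`. -/
def unitBall (l : ℕ) [Fact l.Prime] (K : Type*) [NormedField K] [Algebra ℚ_[l] K]
    (E : IntermediateField ℚ_[l] K) : Subgroup Kˣ where
  carrier := {x | (x : K) ∈ E ∧ ‖(x : K)‖ = 1}
  one_mem' := ⟨by simpa using E.one_mem, by simp⟩
  mul_mem' := by
    rintro a b ⟨haE, ha⟩ ⟨hbE, hb⟩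
    exact ⟨by simpa using E.mul_mem haE hbE, by simp [ha, hb]⟩
  inv_mem' := by
    rintro a ⟨haE, ha⟩
    exact ⟨by simpa using E.inv_mem haE, by simp [ha]⟩

/-- `μ_E`, the group of roots of unity of `E`, as a subgroup of `O_E^×`. -/
def muSub (l : ℕ) [Fact l.Prime] (K : Type*) [NormedField K] [Algebra ℚ_[l] K]
    (E : IntermediateField ℚ_[l] K) : Subgroup ↥(unitBall l K E) :=
  (mu K).subgroupOf (unitBall l K E)

/-- The natural injection `O_E^×/μ_E → Kˣ/μ`. -/
noncomputable def inclQ (l : ℕ) [Fact l.Prime] (K : Type*) [NormedField K]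
    [Algebra ℚ_[l] K] (E : IntermediateField ℚ_[l] K) :
    (↥(unitBall l K E) ⧸ muSub l K E) →* Kˣ ⧸ mu K :=
  QuotientGroup.map (muSub l K E) (mu K) (unitBall l K E).subtype le_rfl

/-- A homomorphism `χ : G → Kˣ/μ` belongs to `Θ_G` if, for some finite subextension
`E` of `Q̄_ℓ/ℚ_ℓ`, it is the composition of a continuous homomorphism
`G → O_E^×/μ_E` with the natural map `O_E^×/μ_E → Kˣ/μ`. -/
def IsTheta (l : ℕ) [Fact l.Prime] (K : Type*) [NormedField K] [Algebra ℚ_[l] K]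
    (G : Type*) [Group G] [TopologicalSpace G] (χ : G →* Kˣ ⧸ mu K) : Prop :=
  ∃ E : IntermediateField ℚ_[l] K, FiniteDimensional ℚ_[l] E ∧
    ∃ φ : G →* (↥(unitBall l K E) ⧸ muSub l K E), Continuous φ ∧ (inclQ l K E).comp φ = χ


section Aux
variable {l : ℕ} [Fact l.Prime] {K : Type*} [NormedField K] [Algebra ℚ_[l] K]

lemma aux_norm_cast (hnorm : ∀ x : ℚ_[l], ‖algebraMap ℚ_[l] K x‖ = ‖x‖) (m : ℕ) :
    ‖(m : K)‖ = ‖(m : ℚ_[l])‖ := by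
  rw [← map_natCast (algebraMap ℚ_[l] K), hnorm]

lemma aux_ultra (hnorm : ∀ x : ℚ_[l], ‖algebraMap ℚ_[l] K x‖ = ‖x‖) :
    IsUltrametricDist K := by
  apply IsUltrametricDist.isUltrametricDist_of_forall_norm_natCast_le_one
  intro m
  rw [aux_norm_cast hnorm]
  have := Padic.norm_int_le_one (p := l) (m : ℤ)
  simpa using this

lemma aux_norm_one {z : K} {m : ℕ} (hm : 0 < m) (h : z ^ m = 1) : ‖z‖ = 1 := by
  have h1 : ‖z‖ ^ m = 1 := by rw [← norm_pow, h, norm_one]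
  rcases lt_trichotomy ‖z‖ 1 with hlt | heq | hgt
  · exact absurd h1 (by nlinarith [pow_lt_one₀ (norm_nonneg z) hlt hm.ne'])
  · exact heq
  · exact absurd h1 (by nlinarith [one_lt_pow₀ hgt hm.ne'])

/-- geometric sum bound: `‖w^j - 1‖ ≤ ‖w - 1‖` for `‖w‖ ≤ 1`. -/
lemma aux_geo (hu : IsUltrametricDist K) {w : K} (hw : ‖w‖ ≤ 1) (j : ℕ) :
    ‖w ^ j - 1‖ ≤ ‖w - 1‖ := by
  rw [← geom_sum_mul w j, norm_mul]
  have hs : ‖∑ i ∈ Finset.range j, w ^ i‖ ≤ 1 :=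
    IsUltrametricDist.norm_sum_le_of_forall_le_of_nonneg zero_le_one
      (fun i _ => by simpa [norm_pow] using pow_le_one₀ (norm_nonneg w) hw)
  calc ‖∑ i ∈ Finset.range j, w ^ i‖ * ‖w - 1‖ ≤ 1 * ‖w - 1‖ :=
        mul_le_mul_of_nonneg_right hs (norm_nonneg _)
    _ = ‖w - 1‖ := one_mul _

lemma aux_mul_sub_one (hu : IsUltrametricDist K) {a b : K} (ha : ‖a‖ ≤ 1) (hb : ‖b‖ ≤ 1) :
    ‖a * b - 1‖ ≤ max ‖a - 1‖ ‖b - 1‖ := by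
  have : a * b - 1 = a * (b - 1) + (a - 1) := by ring
  rw [this]
  refine (IsUltrametricDist.norm_add_le_max _ _).trans (max_le ?_ (le_max_left _ _))
  refine le_trans ?_ (le_max_right ‖a - 1‖ ‖b - 1‖)
  calc ‖a * (b-1)‖ = ‖a‖ * ‖b-1‖ := norm_mul _ _
    _ ≤ 1 * ‖b-1‖ := mul_le_mul_of_nonneg_right ha (norm_nonneg _)
    _ = ‖b-1‖ := one_mul _



lemma aux_one_sub (hu : IsUltrametricDist K) {w : K} (hw : ‖w‖ ≤ 1) : ‖1 - w‖ ≤ 1 := by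
  have h := IsUltrametricDist.norm_add_le_max (1:K) (-w)
  rw [norm_neg, norm_one] at h
  simpa [sub_eq_add_neg] using h.trans (max_le le_rfl hw)
end Aux
section Disc
variable {l : ℕ} [Fact l.Prime] {K : Type*} [NormedField K] [Algebra ℚ_[l] K]

/-- Distinct roots of unity are uniformly separated: `‖z - 1‖ ≥ 1/l`. -/
lemma aux_mu_sep (hnorm : ∀ x : ℚ_[l], ‖algebraMap ℚ_[l] K x‖ = ‖x‖)
    {z : K} (hz : ∃ m : ℕ, 0 < m ∧ z ^ m = 1) (hz1 : z ≠ 1) :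
    ((l : ℝ))⁻¹ ≤ ‖z - 1‖ := by
  have hu := aux_ultra hnorm
  have hlp : l.Prime := Fact.out
  obtain ⟨m, hm, hzm⟩ := hz
  have hfin : IsOfFinOrder z := isOfFinOrder_iff_pow_eq_one.mpr ⟨m, hm, hzm⟩
  set d := orderOf z with hd
  have hdpos : 0 < d := hfin.orderOf_pos
  have hdne : d ≠ 1 := fun h => hz1 (orderOf_eq_one_iff.mp h)
  have hznorm : ‖z‖ = 1 := aux_norm_one hm hzm
  have hzpow_norm : ∀ j : ℕ, ‖z ^ j‖ ≤ 1 := fun j => by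
    rw [norm_pow, hznorm, one_pow]
  set k := d.factorization l with hk
  set m' := d / l ^ k with hm'
  have hdvd : l ^ k ∣ d := Nat.ordProj_dvd d l
  have hdeq : l ^ k * m' = d := Nat.ordProj_mul_ordCompl_eq_self d l
  have hndvd : ¬ l ∣ m' := Nat.not_dvd_ordCompl hlp hdpos.ne'
  have hm'pos : 0 < m' := Nat.ordCompl_pos l hdpos.ne'
  by_cases hcase : m' = 1
  · -- d = l ^ k, pure l-power order, k ≥ 1
    rw [hcase, mul_one] at hdeq
    have hdlk : d = l ^ k := hdeq.symm
    have hk1 : 1 ≤ k := by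
      by_contra h
      have hk0 : k = 0 := by omega
      rw [hk0, pow_zero] at hdlk
      exact hdne hdlk
    set τ := z ^ (l ^ (k - 1)) with hτ
    have hτord : orderOf τ = l := by
      rw [hτ, orderOf_pow' z (Nat.pos_of_ne_zero ?_).ne', ← hd, hdlk,
        Nat.gcd_eq_right (pow_dvd_pow l (Nat.sub_le k 1)),
        Nat.pow_div (Nat.sub_le k 1) hlp.pos]
      · have hkk : k - (k - 1) = 1 := by omega
        rw [hkk, pow_one]
      · exact pow_ne_zero _ hlp.pos.ne'
    have hτprim : IsPrimitiveRoot τ l := hτord ▸ IsPrimitiveRoot.orderOf τ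
    have hτnorm : ‖τ‖ ≤ 1 := hzpow_norm _
    obtain ⟨l', hl'⟩ : ∃ l', l = l' + 1 := ⟨l - 1, by have := hlp.two_le; omega⟩
    have hprod : ∏ i ∈ Finset.range l', (1 - τ ^ (i + 1)) = ((l' : K) + 1) :=
      IsPrimitiveRoot.prod_one_sub_pow_eq_order (hl' ▸ hτprim)
    have hnl : ‖((l' : K) + 1)‖ = (l : ℝ)⁻¹ := by
      have h2 : ((l' : K) + 1) = ((l : ℕ) : K) := by rw [hl']; push_cast; ring
      rw [h2, aux_norm_cast hnorm]
      simpa using Padic.norm_p (p := l)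
    have hτ1 : ‖1 - τ‖ ≤ 1 := aux_one_sub hu hτnorm
    have hles : ∀ i ∈ Finset.range l', ‖1 - τ ^ (i + 1)‖ ≤ ‖1 - τ‖ := fun i _ => by
      rw [norm_sub_rev, norm_sub_rev (1:K) τ]
      exact aux_geo hu hτnorm (i + 1)
    have hstep : (l : ℝ)⁻¹ ≤ ‖1 - τ‖ := by
      have h1 : (l:ℝ)⁻¹ = ∏ i ∈ Finset.range l', ‖1 - τ ^ (i + 1)‖ := by
        rw [← norm_prod, hprod, hnl]
      have h2 : ∏ i ∈ Finset.range l', ‖1 - τ ^ (i + 1)‖ ≤ ‖1 - τ‖ ^ l' := by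
        calc ∏ i ∈ Finset.range l', ‖1 - τ ^ (i + 1)‖
            ≤ ∏ _i ∈ Finset.range l', ‖1 - τ‖ :=
              Finset.prod_le_prod (fun i _ => norm_nonneg _) hles
          _ = ‖1 - τ‖ ^ l' := by simp
      have hl'1 : 1 ≤ l' := by have := hlp.two_le; omega
      have h3 : ‖1 - τ‖ ^ l' ≤ ‖1 - τ‖ := by
        simpa using pow_le_pow_of_le_one (norm_nonneg _) hτ1 hl'1
      linarith
    calc (l : ℝ)⁻¹ ≤ ‖1 - τ‖ := hstep
      _ = ‖τ - 1‖ := norm_sub_rev _ _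
      _ ≤ ‖z - 1‖ := aux_geo hu hznorm.le _
  · -- m' > 1 : β := z ^ (l ^ k) has order m' prime to l, so ‖z-1‖ ≥ 1
    set β := z ^ (l ^ k) with hβ
    have hβord : orderOf β = m' := by
      rw [hβ, orderOf_pow' z (pow_ne_zero _ hlp.pos.ne'), ← hd, Nat.gcd_eq_right hdvd]
    have hβprim : IsPrimitiveRoot β m' := hβord ▸ IsPrimitiveRoot.orderOf β
    have hβnorm : ∀ j : ℕ, ‖β ^ j‖ ≤ 1 := fun j => by
      rw [hβ, ← pow_mul]; exact hzpow_norm _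
    have hβle : ‖β‖ ≤ 1 := by simpa using hβnorm 1
    obtain ⟨q, hq⟩ : ∃ q, m' = q + 1 := ⟨m' - 1, by omega⟩
    have hq1 : 1 ≤ q := by omega
    have hprod : ∏ i ∈ Finset.range q, (1 - β ^ (i + 1)) = ((q : K) + 1) :=
      IsPrimitiveRoot.prod_one_sub_pow_eq_order (hq ▸ hβprim)
    have hnm' : ‖((q : K) + 1)‖ = 1 := by
      have h2 : ((q : K) + 1) = ((m' : ℕ) : K) := by rw [hq]; push_cast; ring
      rw [h2, aux_norm_cast hnorm]
      have hle : ‖((m' : ℤ) : ℚ_[l])‖ ≤ 1 := Padic.norm_int_le_one _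
      have hlt : ¬ ‖((m' : ℤ) : ℚ_[l])‖ < 1 := by
        rw [Padic.norm_intCast_lt_one_iff]
        exact_mod_cast fun h => hndvd (Int.ofNat_dvd.mp h)
      push_cast at hle hlt ⊢
      linarith
    have hfac : ∀ i ∈ Finset.range q, ‖1 - β ^ (i+1)‖ ≤ 1 := fun i _ =>
      aux_one_sub hu (hβnorm (i+1))
    have h0mem : 0 ∈ Finset.range q := Finset.mem_range.mpr (by omega)
    have hsplit : ‖1 - β ^ (0+1)‖ * ∏ i ∈ (Finset.range q).erase 0, ‖1 - β ^ (i+1)‖ = 1 := by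
      rw [Finset.mul_prod_erase (Finset.range q) (fun i => ‖1 - β ^ (i+1)‖) h0mem,
        ← norm_prod, hprod, hnm']
    have hrest : ∏ i ∈ (Finset.range q).erase 0, ‖1 - β ^ (i+1)‖ ≤ 1 :=
      Finset.prod_le_one (fun i _ => norm_nonneg _)
        (fun i hi => hfac i (Finset.mem_of_mem_erase hi))
    have hrest0 : 0 ≤ ∏ i ∈ (Finset.range q).erase 0, ‖1 - β ^ (i+1)‖ :=
      Finset.prod_nonneg (fun i _ => norm_nonneg _)
    have h1β : 1 ≤ ‖1 - β‖ := by
      simp only [zero_add, pow_one] at hsplit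
      nlinarith [norm_nonneg (1 - β)]
    have hβz : (1:ℝ) ≤ ‖z - 1‖ := by
      calc (1:ℝ) ≤ ‖1 - β‖ := h1β
        _ = ‖β - 1‖ := norm_sub_rev _ _
        _ ≤ ‖z - 1‖ := by rw [hβ]; exact aux_geo hu hznorm.le _
    have hinv : (l:ℝ)⁻¹ ≤ 1 := by
      rw [inv_le_one_iff₀]
      right; exact_mod_cast hlp.one_lt.le
    linarith

end Disc
section Top
variable {l : ℕ} [Fact l.Prime] {K : Type*} [NormedField K] [Algebra ℚ_[l] K]

lemma mem_mu_iff {x : Kˣ} : x ∈ mu K ↔ ∃ n : ℕ, 0 < n ∧ x ^ n = 1 := Iff.rfl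

lemma mem_unitBall_iff {E : IntermediateField ℚ_[l] K} {x : Kˣ} :
    x ∈ unitBall l K E ↔ (x : K) ∈ E ∧ ‖(x : K)‖ = 1 := Iff.rfl

/-- The set of roots of unity in `K` is closed. -/
lemma aux_muSet_closed (hnorm : ∀ x : ℚ_[l], ‖algebraMap ℚ_[l] K x‖ = ‖x‖) :
    IsClosed {z : K | ∃ m : ℕ, 0 < m ∧ z ^ m = 1} := by
  set T : Set K := {z : K | ∃ m : ℕ, 0 < m ∧ z ^ m = 1} with hT
  have hlp : l.Prime := Fact.out
  have hlpos : (0:ℝ) < (l:ℝ)⁻¹ := by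
    rw [inv_pos]; exact_mod_cast hlp.pos
  -- separation of distinct roots of unity
  have hsep : ∀ t ∈ T, ∀ t' ∈ T, t ≠ t' → (l:ℝ)⁻¹ ≤ dist t t' := by
    rintro t ⟨m, hm, htm⟩ t' ⟨m', hm', htm'⟩ hne
    have ht'0 : t' ≠ 0 := by
      intro h; rw [h, zero_pow hm'.ne'] at htm'; exact zero_ne_one htm'
    have ht'n : ‖t'‖ = 1 := aux_norm_one hm' htm'
    have hq : ∃ j : ℕ, 0 < j ∧ (t / t') ^ j = 1 :=
      ⟨m * m', Nat.mul_pos hm hm', by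
        have h1 : t ^ (m * m') = 1 := by rw [pow_mul, htm, one_pow]
        have h2 : t' ^ (m * m') = 1 := by rw [mul_comm, pow_mul, htm', one_pow]
        rw [div_pow, h1, h2, div_one]⟩
    have hq1 : t / t' ≠ 1 := fun h => hne (by field_simp at h; exact h)
    have := aux_mu_sep hnorm hq hq1
    calc (l:ℝ)⁻¹ ≤ ‖t / t' - 1‖ := this
      _ = ‖t - t'‖ / ‖t'‖ := by rw [← norm_div]; congr 1; field_simp
      _ = dist t t' := by rw [ht'n, div_one, dist_eq_norm]
  rw [← isOpen_compl_iff, Metric.isOpen_iff]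
  intro z hz
  by_cases hex : ∃ t ∈ T, dist z t < (l:ℝ)⁻¹ / 2
  · obtain ⟨t0, ht0T, ht0⟩ := hex
    have hzt0 : z ≠ t0 := fun h => hz (h ▸ ht0T)
    refine ⟨dist z t0, dist_pos.mpr hzt0, ?_⟩
    intro y hy
    simp only [Metric.mem_ball] at hy
    intro hyT
    have hyt0 : y ≠ t0 := by
      intro h
      rw [h, dist_comm] at hy
      exact lt_irrefl _ hy
    have := hsep y hyT t0 ht0T hyt0
    have hd : dist y t0 ≤ dist y z + dist z t0 := dist_triangle _ _ _
    linarith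
  · push_neg at hex
    refine ⟨(l:ℝ)⁻¹ / 2, by linarith, ?_⟩
    intro y hy hyT
    simp only [Metric.mem_ball] at hy
    have := hex y hyT
    rw [dist_comm] at this
    linarith

/-- The set of elements of `E` of norm 1 is compact. -/
lemma aux_unitSet_compact (hnorm : ∀ x : ℚ_[l], ‖algebraMap ℚ_[l] K x‖ = ‖x‖)
    (E : IntermediateField ℚ_[l] K) [FiniteDimensional ℚ_[l] ↥E] :
    IsCompact {x : K | x ∈ E ∧ ‖x‖ = 1} := by
  letI : NormedSpace ℚ_[l] K :=
    ⟨fun c x => le_of_eq (by rw [Algebra.smul_def, norm_mul, hnorm])⟩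
  set V : Submodule ℚ_[l] K := Subalgebra.toSubmodule E.toSubalgebra with hV
  haveI : FiniteDimensional ℚ_[l] ↥V := ‹FiniteDimensional ℚ_[l] ↥E›
  haveI : ProperSpace ↥V := FiniteDimensional.proper ℚ_[l] ↥V
  have hs : IsCompact (Metric.sphere (0:↥V) 1) := isCompact_sphere _ _
  have himg := hs.image (continuous_subtype_val)
  convert himg using 1
  ext x
  constructor
  · rintro ⟨hxE, hx1⟩
    refine ⟨⟨x, hxE⟩, ?_, rfl⟩
    rw [mem_sphere_zero_iff_norm]
    exact hx1
  · rintro ⟨⟨v, hv⟩, hsph, rfl⟩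
    rw [mem_sphere_zero_iff_norm] at hsph
    exact ⟨hv, hsph⟩

/-- `O_E^×` is compact. -/
lemma aux_unitBall_compact (hnorm : ∀ x : ℚ_[l], ‖algebraMap ℚ_[l] K x‖ = ‖x‖)
    (E : IntermediateField ℚ_[l] K) [FiniteDimensional ℚ_[l] ↥E] :
    CompactSpace ↥(unitBall l K E) := by
  have hemb : Topology.IsEmbedding (fun u : ↥(unitBall l K E) => ((u : Kˣ) : K)) :=
    Units.isEmbedding_val₀.comp Topology.IsEmbedding.subtypeVal
  have hrange : Set.range (fun u : ↥(unitBall l K E) => ((u : Kˣ) : K))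
      = {x : K | x ∈ E ∧ ‖x‖ = 1} := by
    ext x
    constructor
    · rintro ⟨u, rfl⟩
      exact u.2
    · rintro ⟨hxE, hx1⟩
      have hx0 : x ≠ 0 := by
        intro h; rw [h, norm_zero] at hx1; exact zero_ne_one hx1
      exact ⟨⟨Units.mk0 x hx0, ⟨hxE, hx1⟩⟩, rfl⟩
  constructor
  rw [hemb.isCompact_iff, Set.image_univ, hrange]
  exact aux_unitSet_compact hnorm E

/-- `μ_E` is closed in `O_E^×`. -/
lemma aux_muSub_closed (hnorm : ∀ x : ℚ_[l], ‖algebraMap ℚ_[l] K x‖ = ‖x‖)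
    (E : IntermediateField ℚ_[l] K) :
    IsClosed ((muSub l K E : Subgroup ↥(unitBall l K E)) : Set ↥(unitBall l K E)) := by
  have hT := aux_muSet_closed (K := K) hnorm
  have heq : ((muSub l K E : Subgroup ↥(unitBall l K E)) : Set ↥(unitBall l K E))
      = (fun u : ↥(unitBall l K E) => ((u : Kˣ) : K)) ⁻¹' {z : K | ∃ m : ℕ, 0 < m ∧ z ^ m = 1} := by
    ext u
    simp only [SetLike.mem_coe, muSub, Subgroup.mem_subgroupOf, mem_mu_iff, Set.mem_preimage,
      Set.mem_setOf_eq]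
    constructor
    · rintro ⟨n, hn, h⟩
      exact ⟨n, hn, by rw [← Units.val_pow_eq_pow_val, h, Units.val_one]⟩
    · rintro ⟨n, hn, h⟩
      exact ⟨n, hn, Units.ext (by rw [Units.val_pow_eq_pow_val]; exact h)⟩
  rw [heq]
  exact hT.preimage (Units.continuous_val.comp continuous_subtype_val)

end Top
section Newton
variable {l : ℕ} [Fact l.Prime] {K : Type*} [NormedField K] [Algebra ℚ_[l] K]

lemma aux_norm_nat_le_one (hnorm : ∀ x : ℚ_[l], ‖algebraMap ℚ_[l] K x‖ = ‖x‖) (m : ℕ) :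
    ‖(m : K)‖ ≤ 1 := by
  rw [aux_norm_cast hnorm]
  simpa using Padic.norm_int_le_one (p := l) (m : ℤ)

/-- Existence of `n`-th roots of elements of `E` close to `1`, by the Banach
fixed point theorem applied in the (complete) finite-dimensional extension `E`. -/
lemma aux_root_near_one (hnorm : ∀ x : ℚ_[l], ‖algebraMap ℚ_[l] K x‖ = ‖x‖)
    (E : IntermediateField ℚ_[l] K) [FiniteDimensional ℚ_[l] ↥E] {n : ℕ} (hn : 0 < n)
    {ε : K} (hε : ε ∈ E) (hεs : ‖ε‖ < ‖(n : K)‖ ^ 2 / 2) :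
    ∃ y : K, y ∈ E ∧ ‖y‖ ≤ ‖(n : K)‖ / 2 ∧ (1 + y) ^ n = 1 + ε := by
  have hu := aux_ultra hnorm
  letI : NormedSpace ℚ_[l] K :=
    ⟨fun c x => le_of_eq (by rw [Algebra.smul_def, norm_mul, hnorm])⟩
  set ν := ‖(n : K)‖ with hν
  have hνpos : 0 < ν := by
    rw [hν, aux_norm_cast hnorm, norm_pos_iff]
    exact_mod_cast hn.ne'
  have hν1 : ν ≤ 1 := aux_norm_nat_le_one hnorm n
  have hn0 : (n : K) ≠ 0 := by
    intro h; rw [hν, h, norm_zero] at hνpos; exact lt_irrefl _ hνpos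
  set ρ := ν / 2 with hρ
  have hρpos : 0 < ρ := by positivity
  have hρ1 : ρ < 1 := by rw [hρ]; linarith
  set B : Set K := {y : K | y ∈ E ∧ ‖y‖ ≤ ρ} with hB
  -- B is a complete subset of K
  have hVc : IsComplete ((Subalgebra.toSubmodule E.toSubalgebra : Submodule ℚ_[l] K) : Set K) := by
    haveI : FiniteDimensional ℚ_[l] ↥(Subalgebra.toSubmodule E.toSubalgebra) :=
      ‹FiniteDimensional ℚ_[l] ↥E›
    exact Submodule.complete_of_finiteDimensional _
  have hBsubV : B ⊆ ((Subalgebra.toSubmodule E.toSubalgebra : Submodule ℚ_[l] K) : Set K) :=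
    fun y hy => hy.1
  have hBclosed : IsClosed B := by
    have heq : B = ((Subalgebra.toSubmodule E.toSubalgebra : Submodule ℚ_[l] K) : Set K)
        ∩ Metric.closedBall 0 ρ := by
      ext y
      simp only [hB, Set.mem_setOf_eq, Set.mem_inter_iff, Metric.mem_closedBall,
        dist_zero_right, SetLike.mem_coe, Subalgebra.mem_toSubmodule,
        IntermediateField.mem_toSubalgebra]
    rw [heq]
    haveI : FiniteDimensional ℚ_[l] ↥(Subalgebra.toSubmodule E.toSubalgebra) :=
      ‹FiniteDimensional ℚ_[l] ↥E›
    exact (Submodule.closed_of_finiteDimensional _).inter Metric.isClosed_closedBall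
  have hBc : IsComplete B := by
    intro f hf hfB
    obtain ⟨x, _, hlim⟩ := hVc f hf (le_trans hfB (Filter.principal_mono.mpr hBsubV))
    refine ⟨x, ?_, hlim⟩
    have hcl : x ∈ closure B :=
      mem_closure_iff_clusterPt.mpr (hf.1.mono (le_inf hlim hfB))
    rwa [hBclosed.closure_eq] at hcl
  -- the contraction
  set F : K → K := fun y => (n : K)⁻¹ * (ε - ((1 + y) ^ n - 1 - n * y)) with hF
  have hnormle : ∀ y : K, ‖y‖ ≤ ρ → ‖1 + y‖ ≤ 1 := fun y hy => by
    refine (IsUltrametricDist.norm_add_le_max 1 y).trans (max_le (by simp) ?_)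
    linarith
  have key : ∀ y ∈ B, ∀ y' ∈ B, ‖F y - F y'‖ ≤ 2⁻¹ * ‖y - y'‖ := by
    rintro y ⟨hyE, hyρ⟩ y' ⟨hy'E, hy'ρ⟩
    have hwy : ‖1 + y‖ ≤ 1 := hnormle y hyρ
    have hwy' : ‖1 + y'‖ ≤ 1 := hnormle y' hy'ρ
    set S := ∑ i ∈ Finset.range n, (1 + y) ^ i * (1 + y') ^ (n - 1 - i) with hS
    have hgeom : (1 + y) ^ n - (1 + y') ^ n = S * (y - y') := by
      have h := geom_sum₂_mul (1 + y) (1 + y') n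
      have he : (1 + y) - (1 + y') = y - y' := by ring
      rw [he] at h
      rw [← h, hS]
    have hterm : ∀ i ∈ Finset.range n, ‖(1 + y) ^ i * (1 + y') ^ (n - 1 - i) - 1‖ ≤ ρ := by
      intro i _
      have h1 : ‖(1 + y) ^ i - 1‖ ≤ ρ := by
        have h := aux_geo hu hwy i
        have he : (1 + y) - 1 = y := by ring
        rw [he] at h
        exact h.trans hyρ
      have h2 : ‖(1 + y') ^ (n - 1 - i) - 1‖ ≤ ρ := by
        have h := aux_geo hu hwy' (n - 1 - i)
        have he : (1 + y') - 1 = y' := by ring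
        rw [he] at h
        exact h.trans hy'ρ
      refine (aux_mul_sub_one hu ?_ ?_).trans (max_le h1 h2)
      · rw [norm_pow]; exact pow_le_one₀ (norm_nonneg _) hwy
      · rw [norm_pow]; exact pow_le_one₀ (norm_nonneg _) hwy'
    have hSn : ‖S - (n : K)‖ ≤ ρ := by
      have hsum : S - (n : K) = ∑ i ∈ Finset.range n, ((1 + y) ^ i * (1 + y') ^ (n - 1 - i) - 1) := by
        rw [Finset.sum_sub_distrib, Finset.sum_const, Finset.card_range, hS]
        simp
      rw [hsum]
      exact IsUltrametricDist.norm_sum_le_of_forall_le_of_nonneg hρpos.le hterm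
    have hdiff : F y - F y' = (n : K)⁻¹ * (((n : K) - S) * (y - y')) := by
      have hexp : F y - F y' = (n : K)⁻¹ * (((n : K) * (y - y')) - ((1 + y) ^ n - (1 + y') ^ n)) := by
        rw [hF]; ring
      rw [hexp, hgeom]; ring
    rw [hdiff, norm_mul, norm_mul, norm_inv, ← hν, norm_sub_rev]
    have : ν⁻¹ * (‖S - (n:K)‖ * ‖y - y'‖) ≤ ν⁻¹ * (ρ * ‖y - y'‖) := by
      apply mul_le_mul_of_nonneg_left _ (by positivity)
      exact mul_le_mul_of_nonneg_right hSn (norm_nonneg _)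
    refine this.trans (le_of_eq ?_)
    rw [hρ]
    field_simp
  have hF0 : F 0 = (n : K)⁻¹ * ε := by rw [hF]; simp
  have h0B : (0 : K) ∈ B := ⟨E.zero_mem, by simp [hρpos.le]⟩
  have hmaps : ∀ y ∈ B, F y ∈ B := by
    rintro y hyB
    obtain ⟨hyE, hyρ⟩ := hyB
    constructor
    · rw [hF]
      exact E.mul_mem (E.inv_mem (IntermediateField.natCast_mem E n))
        (E.sub_mem hε (E.sub_mem (E.sub_mem (pow_mem (E.add_mem E.one_mem hyE) n) E.one_mem)
          (E.mul_mem (IntermediateField.natCast_mem E n) hyE)))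
    · have hd : ‖F y - F 0‖ ≤ 2⁻¹ * ‖y‖ := by simpa using key y ⟨hyE, hyρ⟩ 0 h0B
      have hF0n : ‖F 0‖ < ρ := by
        rw [hF0, norm_mul, norm_inv, ← hν]
        calc ν⁻¹ * ‖ε‖ < ν⁻¹ * (ν ^ 2 / 2) := by
              exact mul_lt_mul_of_pos_left hεs (by positivity)
          _ = ρ := by rw [hρ]; field_simp
      have : F y = (F y - F 0) + F 0 := by ring
      rw [this]
      refine (IsUltrametricDist.norm_add_le_max _ _).trans (max_le ?_ hF0n.le)
      calc ‖F y - F 0‖ ≤ 2⁻¹ * ‖y‖ := hd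
        _ ≤ 2⁻¹ * ρ := by linarith
        _ ≤ ρ := by linarith
  haveI : Nonempty ↥B := ⟨⟨0, h0B⟩⟩
  haveI : CompleteSpace ↥B := hBc.completeSpace_coe
  set Ft : ↥B → ↥B := fun y => ⟨F y, hmaps y y.2⟩ with hFt
  have hcontr : ContractingWith (1/2 : NNReal) Ft := by
    constructor
    · rw [← NNReal.coe_lt_coe]; norm_num
    · apply LipschitzWith.of_dist_le_mul
      intro a b
      rw [Subtype.dist_eq, Subtype.dist_eq, dist_eq_norm, dist_eq_norm]
      have := key a a.2 b b.2
      calc ‖(Ft a : K) - (Ft b : K)‖ = ‖F a - F b‖ := rfl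
        _ ≤ 2⁻¹ * ‖(a : K) - b‖ := this
        _ = ((1/2 : NNReal) : ℝ) * ‖(a : K) - b‖ := by norm_num
  set y := ContractingWith.fixedPoint Ft hcontr with hy
  have hfix : Ft y = y := hcontr.fixedPoint_isFixedPt
  refine ⟨y, y.2.1, y.2.2, ?_⟩
  have h1 : F y = y := congrArg Subtype.val hfix
  rw [hF] at h1
  have h2 := congrArg (fun t => (n : K) * t) h1
  simp only [← mul_assoc, mul_inv_cancel₀ hn0, one_mul] at h2
  linear_combination -h2
end Newton
section Cover
variable {l : ℕ} [Fact l.Prime] {K : Type*} [NormedField K] [Algebra ℚ_[l] K]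

lemma aux_norm_one' {z : K} {m : ℕ} (hm : 0 < m) (h : ‖z ^ m‖ = 1) : ‖z‖ = 1 := by
  have h1 : ‖z‖ ^ m = 1 := by rw [← norm_pow]; exact h
  rcases lt_trichotomy ‖z‖ 1 with hlt | heq | hgt
  · exact absurd h1 (by nlinarith [pow_lt_one₀ (norm_nonneg z) hlt hm.ne'])
  · exact heq
  · exact absurd h1 (by nlinarith [one_lt_pow₀ hgt hm.ne'])

open IntermediateField in
/-- Key covering lemma: there is a single finite extension `E'` of `E` containing
`n`-th roots of all norm-one elements of `E`. -/
lemma aux_cover [IsAlgClosure ℚ_[l] K]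
    (hnorm : ∀ x : ℚ_[l], ‖algebraMap ℚ_[l] K x‖ = ‖x‖)
    (E : IntermediateField ℚ_[l] K) [FiniteDimensional ℚ_[l] ↥E] {n : ℕ} (hn : 0 < n) :
    ∃ E' : IntermediateField ℚ_[l] K, FiniteDimensional ℚ_[l] ↥E' ∧ E ≤ E' ∧
      ∀ u : K, u ∈ E → ‖u‖ = 1 → ∃ z : K, z ∈ E' ∧ ‖z‖ = 1 ∧ z ^ n = u := by
  haveI : IsAlgClosed K := IsAlgClosure.isAlgClosed ℚ_[l]
  haveI halg : Algebra.IsAlgebraic ℚ_[l] K := IsAlgClosure.isAlgebraic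
  have hνpos : 0 < ‖(n : K)‖ := by
    rw [aux_norm_cast hnorm, norm_pos_iff]
    exact_mod_cast hn.ne'
  set δ := ‖(n : K)‖ ^ 2 / 2 with hδdef
  have hδ : 0 < δ := by positivity
  set S := {x : K | x ∈ E ∧ ‖x‖ = 1} with hS
  have hScomp : IsCompact S := aux_unitSet_compact hnorm E
  have hcov : S ⊆ ⋃ x ∈ S, Metric.ball x δ := fun x hx =>
    Set.mem_biUnion hx (Metric.mem_ball_self hδ)
  obtain ⟨t, htS, htfin, hcov'⟩ :=
    hScomp.elim_finite_subcover_image (fun x _ => Metric.isOpen_ball) hcov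
  have hex : ∀ x : K, ∃ z : K, z ^ n = x := fun x => IsAlgClosed.exists_pow_nat_eq x hn
  choose r hr using hex
  haveI : Finite ↥t := htfin.to_subtype
  haveI : ∀ x : ↥t, FiniteDimensional ℚ_[l] ↥(ℚ_[l]⟮r (x : K)⟯) := fun x =>
    IntermediateField.adjoin.finiteDimensional ((halg.isAlgebraic (r (x : K))).isIntegral)
  haveI hfdsup : FiniteDimensional ℚ_[l] ↥(⨆ x : ↥t, ℚ_[l]⟮r (x : K)⟯) :=
    IntermediateField.finiteDimensional_iSup_of_finite
  refine ⟨E ⊔ ⨆ x : ↥t, ℚ_[l]⟮r (x : K)⟯, IntermediateField.finiteDimensional_sup _ _,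
    le_sup_left, ?_⟩
  intro u huE hu1
  have huS : u ∈ S := ⟨huE, hu1⟩
  obtain ⟨x, hxt, hxball⟩ : ∃ x ∈ t, u ∈ Metric.ball x δ := by
    have := hcov' huS
    simpa using this
  obtain ⟨hxE, hx1⟩ : x ∈ E ∧ ‖x‖ = 1 := htS hxt
  have hx0 : x ≠ 0 := by
    intro h; rw [h, norm_zero] at hx1; exact zero_ne_one hx1
  set ε := u / x - 1 with hε
  have hεE : ε ∈ E := E.sub_mem (E.div_mem huE hxE) E.one_mem
  have hεnorm : ‖ε‖ < δ := by
    have heq : ε = (u - x) / x := by rw [hε]; field_simp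
    rw [heq, norm_div, hx1, div_one]
    rw [Metric.mem_ball, dist_eq_norm] at hxball
    exact hxball
  obtain ⟨y, hyE, _, hypow⟩ := aux_root_near_one hnorm E hn hεE hεnorm
  have hux : (1 + y) ^ n = u / x := by
    rw [hypow, hε]; ring
  refine ⟨(1 + y) * r x, ?_, ?_, ?_⟩
  · refine mul_mem (le_sup_left (α := IntermediateField ℚ_[l] K) ?_ : _) ?_
    · exact E.add_mem E.one_mem hyE
    · refine (le_sup_right : (⨆ x : ↥t, ℚ_[l]⟮r (x : K)⟯) ≤ _) ?_
      refine le_iSup (fun x : ↥t => ℚ_[l]⟮r (x : K)⟯) ⟨x, hxt⟩ ?_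
      exact IntermediateField.mem_adjoin_simple_self ℚ_[l] (r x)
  · apply aux_norm_one' hn
    rw [mul_pow, hux, hr x, div_mul_cancel₀ u hx0, hu1]
  · rw [mul_pow, hux, hr x, div_mul_cancel₀ u hx0]
end Cover

/-- For every compact Hausdorff abelian topological group `G`, the
group `Θ_G` is uniquely divisible: it is torsion-free, and every element of
`Θ_G` admits an `n`-th root in `Θ_G` for every `n ≥ 1`. -/
theorem theta_uniquely_divisible
    {l : ℕ} [Fact l.Prime]
    (K : Type*) [NormedField K] [Algebra ℚ_[l] K] [IsAlgClosure ℚ_[l] K]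
    (hnorm : ∀ x : ℚ_[l], ‖algebraMap ℚ_[l] K x‖ = ‖x‖)
    (G : Type*) [CommGroup G] [TopologicalSpace G] [IsTopologicalGroup G]
    [CompactSpace G] [T2Space G] :
    (∀ χ : G →* Kˣ ⧸ mu K, IsTheta l K G χ →
      ∀ n : ℕ, 0 < n → (∀ g, χ g ^ n = 1) → χ = 1) ∧
    (∀ χ : G →* Kˣ ⧸ mu K, IsTheta l K G χ → ∀ n : ℕ, 0 < n →
      ∃ ξ : G →* Kˣ ⧸ mu K, IsTheta l K G ξ ∧ ∀ g, ξ g ^ n = χ g) := by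
  constructor
  · -- torsion-freeness (`Kˣ ⧸ μ` is torsion-free)
    intro χ _ n hn h1
    ext g
    obtain ⟨x, hx⟩ := QuotientGroup.mk_surjective (χ g)
    have hxn : ((x ^ n : Kˣ) : Kˣ ⧸ mu K) = 1 := by
      have h2 : ((x ^ n : Kˣ) : Kˣ ⧸ mu K) = (QuotientGroup.mk x : Kˣ ⧸ mu K) ^ n := by
        simpa using map_pow (QuotientGroup.mk' (mu K)) x n
      rw [h2, hx]
      exact h1 g
    obtain ⟨m, hm, hms⟩ : x ^ n ∈ mu K := (QuotientGroup.eq_one_iff _).mp hxn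
    have hxmu : x ∈ mu K := ⟨n * m, Nat.mul_pos hn hm, by rw [pow_mul]; exact hms⟩
    show χ g = 1
    rw [← hx]
    exact (QuotientGroup.eq_one_iff x).mpr hxmu
  · -- divisibility
    intro χ hχ n hn
    obtain ⟨E, hfdE, φ, hφc, hφeq⟩ := hχ
    haveI := hfdE
    obtain ⟨E', hfd', hEle, hroot⟩ := aux_cover hnorm E hn
    haveI := hfd'
    have hUle : unitBall l K E ≤ unitBall l K E' := fun x hx => ⟨hEle hx.1, hx.2⟩
    set ι : ↥(unitBall l K E) →* ↥(unitBall l K E') := Subgroup.inclusion hUle with hι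
    have hcond : muSub l K E ≤ (muSub l K E').comap ι := by
      intro x hx
      rw [Subgroup.mem_comap]
      rw [muSub, Subgroup.mem_subgroupOf] at hx ⊢
      rwa [Subgroup.coe_inclusion]
    set j := QuotientGroup.map (muSub l K E) (muSub l K E') ι hcond with hj
    have hιc : Continuous ι := Continuous.subtype_mk continuous_subtype_val _
    have hjcont : Continuous j := by
      refine ((QuotientGroup.isQuotientMap_mk (muSub l K E)).continuous_iff).mpr ?_
      have heq : (⇑j) ∘ QuotientGroup.mk = QuotientGroup.mk ∘ ⇑ι := by
        funext u
        exact QuotientGroup.map_mk _ _ _ _ _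
      rw [heq]
      exact continuous_quot_mk.comp hιc
    have hcomp : (inclQ l K E').comp j = inclQ l K E := by
      ext q
      rfl
    haveI hc' : CompactSpace ↥(unitBall l K E') := aux_unitBall_compact hnorm E'
    haveI : IsClosed ((muSub l K E' : Subgroup ↥(unitBall l K E'))
        : Set ↥(unitBall l K E')) := aux_muSub_closed hnorm E'
    haveI : T3Space (↥(unitBall l K E') ⧸ muSub l K E') := QuotientGroup.instT3Space _
    set P : (↥(unitBall l K E') ⧸ muSub l K E') →* (↥(unitBall l K E') ⧸ muSub l K E') :=
      { toFun := fun q => q ^ n, map_one' := one_pow n, map_mul' := fun a b => mul_pow a b n }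
      with hP
    have htor : ∀ q : ↥(unitBall l K E') ⧸ muSub l K E', q ^ n = 1 → q = 1 := by
      intro q hq
      obtain ⟨u, rfl⟩ := QuotientGroup.mk_surjective q
      have hq' : ((u ^ n : ↥(unitBall l K E')) : ↥(unitBall l K E') ⧸ muSub l K E') = 1 := by
        have h2 : ((u ^ n : ↥(unitBall l K E')) : ↥(unitBall l K E') ⧸ muSub l K E')
            = (QuotientGroup.mk u : ↥(unitBall l K E') ⧸ muSub l K E') ^ n := by
          simpa using map_pow (QuotientGroup.mk' (muSub l K E')) u n
        rw [h2]
        exact hq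
      have humem : u ^ n ∈ muSub l K E' := (QuotientGroup.eq_one_iff _).mp hq'
      rw [muSub, Subgroup.mem_subgroupOf] at humem
      obtain ⟨m, hm, hms⟩ := humem
      have humu : ((u : Kˣ)) ∈ mu K := by
        refine ⟨n * m, Nat.mul_pos hn hm, ?_⟩
        rw [pow_mul]
        have : ((u ^ n : ↥(unitBall l K E')) : Kˣ) = (u : Kˣ) ^ n := rfl
        rw [← this]
        exact hms
      refine (QuotientGroup.eq_one_iff _).mpr ?_
      rw [muSub, Subgroup.mem_subgroupOf]
      exact humu
    have hPinj : Function.Injective P := by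
      intro a b hab
      have h1 : P (a * b⁻¹) = 1 := by
        rw [map_mul, map_inv, hab, mul_inv_cancel]
      exact mul_inv_eq_one.mp (htor _ h1)
    have hmem : ∀ q : ↥(unitBall l K E) ⧸ muSub l K E, j q ∈ P.range := by
      intro q
      obtain ⟨u, rfl⟩ := QuotientGroup.mk_surjective q
      obtain ⟨z, hzE', hz1, hzn⟩ := hroot ((u : Kˣ) : K) u.2.1 u.2.2
      have hz0 : z ≠ 0 := by
        intro h; rw [h, norm_zero] at hz1; exact zero_ne_one hz1
      have hzU' : Units.mk0 z hz0 ∈ unitBall l K E' := ⟨hzE', hz1⟩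
      set w : ↥(unitBall l K E') := ⟨Units.mk0 z hz0, hzU'⟩ with hw
      have hzeq : w ^ n = ι u := by
        apply Subtype.ext
        apply Units.ext
        show z ^ n = ((u : Kˣ) : K)
        exact hzn
      refine ⟨QuotientGroup.mk w, ?_⟩
      show (QuotientGroup.mk w : ↥(unitBall l K E') ⧸ muSub l K E') ^ n = j (QuotientGroup.mk u)
      have h2 : ((w ^ n : ↥(unitBall l K E')) : ↥(unitBall l K E') ⧸ muSub l K E')
          = (QuotientGroup.mk w : ↥(unitBall l K E') ⧸ muSub l K E') ^ n := by
        simpa using map_pow (QuotientGroup.mk' (muSub l K E')) w n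
      rw [← h2, hzeq]
      exact (QuotientGroup.map_mk _ _ _ _ _).symm
    set c : G →* ↥P.range :=
      (j.comp φ).codRestrict P.range (fun g => hmem (φ g)) with hc
    set e : (↥(unitBall l K E') ⧸ muSub l K E') ≃* ↥P.range :=
      MulEquiv.ofBijective P.rangeRestrict
        ⟨fun a b h => hPinj (congrArg Subtype.val h), P.rangeRestrict_surjective⟩ with he
    have hecont : Continuous e := by
      have : (e : (↥(unitBall l K E') ⧸ muSub l K E') → ↥P.range)
          = fun q => ⟨q ^ n, ⟨q, rfl⟩⟩ := rfl
      rw [this]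
      exact Continuous.subtype_mk (continuous_pow n) _
    set ψ : G →* (↥(unitBall l K E') ⧸ muSub l K E') := (e.symm.toMonoidHom).comp c with hψ
    have hψc : Continuous ψ := by
      have hsc : Continuous (⇑e.symm : ↥P.range → ↥(unitBall l K E') ⧸ muSub l K E') :=
        (Continuous.homeoOfEquivCompactToT2 (f := e.toEquiv) hecont).symm.continuous
      exact hsc.comp (Continuous.subtype_mk (hjcont.comp hφc) _)
    have hψP : ∀ g, (ψ g) ^ n = j (φ g) := by
      intro g
      have heq : e (ψ g) = c g := e.apply_symm_apply (c g)
      have := congrArg Subtype.val heq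
      exact this
    refine ⟨(inclQ l K E').comp ψ, ⟨E', hfd', ψ, hψc, rfl⟩, ?_⟩
    intro g
    calc ((inclQ l K E').comp ψ) g ^ n = inclQ l K E' ((ψ g) ^ n) := by
          rw [MonoidHom.comp_apply, ← map_pow]
      _ = inclQ l K E' (j (φ g)) := by rw [hψP]
      _ = ((inclQ l K E').comp j) (φ g) := rfl
      _ = (inclQ l K E) (φ g) := by rw [hcomp]
      _ = χ g := by rw [← hφeq]; rfl
end

section
/- Let G be a compact Hausdorff abelian topological group and let χ : G → Q̄_ℓ^× be a continuous group homomorphism all of whose values are roots of unity. Then χ has finite order: there exists an integer m ≥ 1 such that χ(g)^m = 1 for all g ∈ G. -/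
open Polynomial Finset

section Aux

variable {l : ℕ} [Fact l.Prime] {K : Type*} [NormedField K]

private lemma aux_norm_one_of_pow_eq_one {ζ : K} {n : ℕ} (hn : 0 < n) (hζ : ζ ^ n = 1) :
    ‖ζ‖ = 1 := by
  have h : ‖ζ‖ ^ n = 1 := by rw [← norm_pow, hζ, norm_one]
  rcases lt_trichotomy ‖ζ‖ 1 with h1 | h1 | h1
  · have := pow_lt_one₀ (norm_nonneg ζ) h1 hn.ne'
    rw [h] at this; exact absurd this (lt_irrefl 1)
  · exact h1
  · have := one_lt_pow₀ h1 hn.ne'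
    rw [h] at this; exact absurd this (lt_irrefl 1)

private lemma aux_geom_bound [IsUltrametricDist K] {ζ : K} (h1 : ‖ζ‖ = 1) (k : ℕ) :
    ‖ζ ^ k - 1‖ ≤ ‖ζ - 1‖ := by
  rw [← geom_sum_mul, norm_mul]
  have hs : ‖∑ i ∈ Finset.range k, ζ ^ i‖ ≤ 1 := by
    apply IsUltrametricDist.norm_sum_le_of_forall_le_of_nonneg zero_le_one
    intro i _
    rw [norm_pow, h1, one_pow]
  calc ‖∑ i ∈ Finset.range k, ζ ^ i‖ * ‖ζ - 1‖ ≤ 1 * ‖ζ - 1‖ :=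
        mul_le_mul_of_nonneg_right hs (norm_nonneg _)
    _ = ‖ζ - 1‖ := one_mul _

private lemma aux_prime_order_bound [IsUltrametricDist K] {q : ℕ} (hq : q.Prime) {ξ : K}
    (hξ : IsPrimitiveRoot ξ q) : ‖(q : K)‖ ≤ ‖ξ - 1‖ ^ (q - 1) := by
  haveI : Fact q.Prime := ⟨hq⟩
  haveI : NeZero q := ⟨hq.ne_zero⟩
  have key : (q : K) = ∏ μ ∈ primitiveRoots q K, (1 - μ) := by
    have h2 := congrArg (eval 1) (cyclotomic_eq_prod_X_sub_primitiveRoots hξ)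
    rw [eval_one_cyclotomic_prime] at h2
    simpa [eval_prod] using h2
  have hξ1 : ‖ξ‖ = 1 := aux_norm_one_of_pow_eq_one hq.pos hξ.pow_eq_one
  have hbound : ∀ μ ∈ primitiveRoots q K, ‖1 - μ‖ ≤ ‖ξ - 1‖ := by
    intro μ hμ
    have hμq : IsPrimitiveRoot μ q := (mem_primitiveRoots hq.pos).mp hμ
    obtain ⟨i, _, rfl⟩ := hξ.eq_pow_of_pow_eq_one hμq.pow_eq_one
    rw [norm_sub_rev]
    exact aux_geom_bound hξ1 i
  have hcard : (primitiveRoots q K).card = q - 1 := by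
    rw [hξ.card_primitiveRoots, Nat.totient_prime hq]
  calc ‖(q : K)‖ = ∏ μ ∈ primitiveRoots q K, ‖1 - μ‖ := by rw [key, norm_prod]
    _ ≤ ∏ _μ ∈ primitiveRoots q K, ‖ξ - 1‖ :=
        Finset.prod_le_prod (fun _ _ => norm_nonneg _) hbound
    _ = ‖ξ - 1‖ ^ (q - 1) := by rw [Finset.prod_const, hcard]

private lemma aux_root_of_unity_far [Algebra ℚ_[l] K] [IsUltrametricDist K]
    (hnorm : ∀ x : ℚ_[l], ‖algebraMap ℚ_[l] K x‖ = ‖x‖)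
    {ζ : K} {n : ℕ} (hn : 0 < n) (hζ : ζ ^ n = 1) (hne : ζ ≠ 1) :
    ((l : ℝ)⁻¹) ^ (((l : ℝ) - 1)⁻¹) ≤ ‖ζ - 1‖ := by
  have hlm : 1 < l := (Fact.out : l.Prime).one_lt
  have hnatnorm : ∀ m : ℕ, ‖(m : K)‖ = ‖(m : ℚ_[l])‖ := by
    intro m
    rw [← map_natCast (algebraMap ℚ_[l] K) m, hnorm]
  set c : ℝ := ((l : ℝ)⁻¹) ^ (((l : ℝ) - 1)⁻¹) with hc
  have hl1R : (0:ℝ) < (l : ℝ) - 1 := by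
    have : (1:ℝ) < (l:ℝ) := by exact_mod_cast hlm
    linarith
  have hc_le_one : c ≤ 1 := by
    apply Real.rpow_le_one (by positivity) _ (le_of_lt (inv_pos.mpr hl1R))
    rw [inv_le_one_iff₀]
    right
    exact_mod_cast hlm.le
  -- order of ζ
  have hfin : IsOfFinOrder ζ := isOfFinOrder_iff_pow_eq_one.mpr ⟨n, hn, hζ⟩
  have hord1 : orderOf ζ ≠ 1 := fun h => hne (orderOf_eq_one_iff.mp h)
  obtain ⟨q, hq, hdvd⟩ := Nat.exists_prime_and_dvd hord1
  have hordpos : 0 < orderOf ζ := hfin.orderOf_pos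
  have hprim : IsPrimitiveRoot ζ (orderOf ζ) := IsPrimitiveRoot.orderOf ζ
  obtain ⟨d, hd⟩ := hdvd
  have hprimξ : IsPrimitiveRoot (ζ ^ d) q := hprim.pow hordpos (by rw [hd, mul_comm])
  have hζ1 : ‖ζ‖ = 1 := aux_norm_one_of_pow_eq_one hn hζ
  have hle : ‖ζ ^ d - 1‖ ≤ ‖ζ - 1‖ := aux_geom_bound hζ1 d
  have hb : ‖(q : K)‖ ≤ ‖ζ ^ d - 1‖ ^ (q - 1) := aux_prime_order_bound hq hprimξ
  rcases eq_or_ne q l with rfl | hql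
  · -- q = l
    rw [hnatnorm, Padic.norm_p] at hb
    have h0 : (0:ℝ) ≤ ‖ζ ^ d - 1‖ := norm_nonneg _
    have key : c ≤ ‖ζ ^ d - 1‖ := by
      have h1 : c ≤ (‖ζ ^ d - 1‖ ^ (q - 1)) ^ (((q : ℝ) - 1)⁻¹) :=
        Real.rpow_le_rpow (by positivity) hb (le_of_lt (inv_pos.mpr hl1R))
      rwa [← Real.rpow_natCast ‖ζ ^ d - 1‖ (q - 1), ← Real.rpow_mul h0,
        (by push_cast [Nat.cast_sub hlm.le]; ring_nf : ((q - 1 : ℕ) : ℝ) = (q : ℝ) - 1),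
        mul_inv_cancel₀ hl1R.ne', Real.rpow_one] at h1
    exact key.trans hle
  · -- q ≠ l
    have hq1 : ‖(q : K)‖ = 1 := by
      rw [hnatnorm]
      refine le_antisymm ?_ ?_
      · exact_mod_cast Padic.norm_int_le_one (q : ℤ)
      · by_contra hlt
        push_neg at hlt
        have : ‖((q : ℤ) : ℚ_[l])‖ < 1 := by exact_mod_cast hlt
        have hdvd' : (l : ℤ) ∣ (q : ℤ) := Padic.norm_intCast_lt_one_iff.mp this
        have : l ∣ q := Int.ofNat_dvd.mp hdvd'
        exact hql (((Nat.prime_dvd_prime_iff_eq (Fact.out) hq).mp this)).symm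
    have honele : 1 ≤ ‖ζ ^ d - 1‖ := by
      by_contra h
      push_neg at h
      have := pow_lt_one₀ (norm_nonneg _) h (Nat.sub_ne_zero_of_lt hq.one_lt)
      rw [hq1] at hb
      linarith
    exact hc_le_one.trans (honele.trans hle)

end Aux

/-- Let `K` be an algebraic closure of `ℚ_ℓ`, viewed as a normed
field whose norm extends the `ℓ`-adic absolute value (this determines the
topology, such an extension being unique).  Let `G` be a compact Hausdorff
abelian topological group and `χ : G → Kˣ` a continuous homomorphism all of
whose values are roots of unity.  Then `χ` has finite order: some `m ≥ 1`
satisfies `χ(g)^m = 1` for all `g`. -/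
theorem continuous_char_valued_in_roots_of_unity_finite_order
    {l : ℕ} [Fact l.Prime]
    (K : Type*) [NormedField K] [Algebra ℚ_[l] K] [IsAlgClosure ℚ_[l] K]
    (hnorm : ∀ x : ℚ_[l], ‖algebraMap ℚ_[l] K x‖ = ‖x‖)
    (G : Type*) [CommGroup G] [TopologicalSpace G] [IsTopologicalGroup G]
    [CompactSpace G] [T2Space G]
    (χ : G →* Kˣ) (hχ : Continuous χ)
    (htors : ∀ g : G, ∃ n : ℕ, 0 < n ∧ χ g ^ n = 1) :
    ∃ m : ℕ, 1 ≤ m ∧ ∀ g : G, χ g ^ m = 1 := by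
  haveI : IsUltrametricDist K := by
    apply IsUltrametricDist.isUltrametricDist_of_forall_norm_natCast_le_one
    intro n
    rw [← map_natCast (algebraMap ℚ_[l] K) n, hnorm]
    exact_mod_cast Padic.norm_int_le_one (n : ℤ)
  set c : ℝ := ((l : ℝ)⁻¹) ^ (((l : ℝ) - 1)⁻¹) with hc
  have hlm : 1 < l := (Fact.out : l.Prime).one_lt
  have hc0 : 0 < c := Real.rpow_pos_of_pos (by positivity) _
  -- the range of g ↦ (χ g : K) is c-separated and compact, hence finite
  set f : G → K := fun g => (χ g : K) with hf
  have hfc : Continuous f := Units.continuous_val.comp hχ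
  have hcomp : IsCompact (Set.range f) := isCompact_range hfc
  have hsep : ∀ x ∈ Set.range f, ∀ y ∈ Set.range f, x ≠ y → c ≤ ‖y - x‖ := by
    rintro x ⟨g, rfl⟩ y ⟨h, rfl⟩ hxy
    set ζ : Kˣ := (χ g)⁻¹ * χ h with hζ
    obtain ⟨n, hn, hpow⟩ := htors (g⁻¹ * h)
    have hζpow : (ζ : K) ^ n = 1 := by
      have : χ (g⁻¹ * h) = ζ := by rw [map_mul, map_inv, hζ]
      rw [← this, ← Units.val_pow_eq_pow_val, hpow, Units.val_one]
    have hζne : (ζ : K) ≠ 1 := by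
      intro h1
      apply hxy
      have : ζ = 1 := Units.ext h1
      have h2 : (χ g)⁻¹ * χ h = 1 := this
      have h3 : χ h = χ g := by
        rw [inv_mul_eq_one] at h2
        exact h2.symm
      simp [hf, h3]
    have hkey : c ≤ ‖(ζ : K) - 1‖ := aux_root_of_unity_far hnorm hn hζpow hζne
    have heq : f h - f g = (f g) * ((ζ : K) - 1) := by
      have : (χ g : K) * (ζ : K) = (χ h : K) := by
        rw [hζ]
        push_cast
        rw [← mul_assoc, mul_inv_cancel₀ (Units.ne_zero (χ g)), one_mul]
      simp only [hf, mul_sub, mul_one, this]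
    have hg1 : ‖f g‖ = 1 := by
      obtain ⟨m, hm, hpm⟩ := htors g
      refine aux_norm_one_of_pow_eq_one hm ?_
      show ((χ g : K)) ^ m = 1
      rw [← Units.val_pow_eq_pow_val, hpm, Units.val_one]
    rw [heq, norm_mul, hg1, one_mul]
    exact hkey
  have hfin : (Set.range f).Finite := by
    obtain ⟨t, htf, hcov⟩ :=
      (Metric.totallyBounded_iff.mp hcomp.totallyBounded) (c / 2) (by positivity)
    have hsub : Set.range f ⊆ ⋃ y ∈ t, (Set.range f ∩ Metric.ball y (c / 2)) := by
      intro x hx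
      obtain ⟨y, hy, hxy⟩ := Set.mem_iUnion₂.mp (hcov hx)
      exact Set.mem_iUnion₂.mpr ⟨y, hy, hx, hxy⟩
    refine Set.Finite.subset (htf.biUnion fun y _ => ?_) hsub
    apply Set.Subsingleton.finite
    intro a ha b hb
    by_contra hab
    have h1 := hsep a ha.1 b hb.1 hab
    have da : dist a y < c / 2 := Metric.mem_ball.mp ha.2
    have db : dist b y < c / 2 := Metric.mem_ball.mp hb.2
    have : dist b a < c := by
      calc dist b a ≤ dist b y + dist y a := dist_triangle _ _ _
        _ < c / 2 + c / 2 := by rw [dist_comm y a]; exact add_lt_add db da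
        _ = c := by ring
    rw [dist_eq_norm] at this
    linarith
  have hfinχ : (Set.range χ).Finite := by
    have himg : Set.range f = ((↑) : Kˣ → K) '' Set.range χ := by
      rw [← Set.range_comp]; rfl
    rw [himg] at hfin
    exact Set.Finite.of_finite_image hfin
      (Set.injOn_of_injective (fun _ _ h => Units.ext h))
  refine ⟨∏ t ∈ hfinχ.toFinset, orderOf t, ?_, ?_⟩
  · rw [Nat.one_le_iff_ne_zero, Finset.prod_ne_zero_iff]
    intro t ht
    obtain ⟨g, rfl⟩ := hfinχ.mem_toFinset.mp ht
    obtain ⟨n, hn, hpow⟩ := htors g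
    exact (isOfFinOrder_iff_pow_eq_one.mpr ⟨n, hn, hpow⟩).orderOf_pos.ne'
  · intro g
    have hg : χ g ∈ hfinχ.toFinset := hfinχ.mem_toFinset.mpr ⟨g, rfl⟩
    exact orderOf_dvd_iff_pow_eq_one.mp (Finset.dvd_prod_of_mem _ hg)
end

section
/- Let G be a compact Hausdorff abelian topological group, let E be a finite subextension of Q̄_ℓ/ℚ_ℓ, and let χ : G → O_E^×/μ_E be a continuous group homomorphism. Then there exist a continuous group homomorphism ξ : G → O_E^× and an integer n ≥ 1 such that the composition of ξ with the quotient map O_E^× → O_E^×/μ_E equals χ^n. -/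
private lemma norm_eq_one_of_pow_eq_one' {K : Type*} [NormedDivisionRing K] {x : K} {n : ℕ}
    (hn : 0 < n) (h : x ^ n = 1) : ‖x‖ = 1 := by
  have h1 : ‖x‖ ^ n = 1 := by rw [← norm_pow, h, norm_one]
  have h0 : (0:ℝ) ≤ ‖x‖ := norm_nonneg x
  rcases lt_trichotomy ‖x‖ 1 with h2 | h2 | h2
  · have := pow_lt_one₀ h0 h2 hn.ne'
    linarith
  · exact h2
  · have := one_lt_pow₀ h2 hn.ne'
    linarith

private lemma aux_sep {l : ℕ} [hl : Fact l.Prime] {K : Type*} [NormedField K]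
    [Algebra ℚ_[l] K] (hnorm : ∀ x : ℚ_[l], ‖algebraMap ℚ_[l] K x‖ = ‖x‖)
    {ζ : K} (hζ1 : ζ ≠ 1) {n : ℕ} (hn : 0 < n) (hpow : ζ ^ n = 1) :
    (l : ℝ)⁻¹ ≤ ‖ζ - 1‖ := by
  haveI : IsUltrametricDist K := by
    apply IsUltrametricDist.isUltrametricDist_of_forall_norm_natCast_le_one
    intro k
    rw [show ((k : K)) = algebraMap ℚ_[l] K (k : ℚ_[l]) by simp, hnorm]
    simpa using Padic.norm_int_le_one (p := l) (k : ℤ)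
  have hζnorm : ‖ζ‖ = 1 := norm_eq_one_of_pow_eq_one' hn hpow
  have hfo : IsOfFinOrder ζ := isOfFinOrder_iff_pow_eq_one.mpr ⟨n, hn, hpow⟩
  set m := orderOf ζ with hm
  have hmpos : 0 < m := hfo.orderOf_pos
  have hmne : m ≠ 1 := fun h => hζ1 (orderOf_eq_one_iff.mp h)
  set p := m.minFac with hpdef
  have hp : p.Prime := Nat.minFac_prime hmne
  have hpd : p ∣ m := Nat.minFac_dvd m
  set η := ζ ^ (m / p) with hη
  have hζknorm : ∀ k : ℕ, ‖ζ ^ k‖ = 1 := fun k => by rw [norm_pow, hζnorm, one_pow]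
  have hηp : η ^ p = 1 := by rw [hη, ← pow_mul, Nat.div_mul_cancel hpd, pow_orderOf_eq_one]
  have hη1 : η ≠ 1 := by
    intro h
    have hdvd : m ∣ m / p := orderOf_dvd_of_pow_eq_one (by rw [← hη, h])
    have h1 := Nat.le_of_dvd (Nat.div_pos (Nat.minFac_le hmpos) hp.pos) hdvd
    have h2 : m / p < m := Nat.div_lt_self hmpos hp.one_lt
    exact absurd h2 (not_lt.mpr h1)
  have hgeom : (∑ i ∈ Finset.range p, η ^ i) = 0 := by
    have h := geom_sum_mul η p
    rw [hηp, sub_self] at h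
    exact (mul_eq_zero.mp h).resolve_right (sub_ne_zero.mpr hη1)
  have hsub : ∀ k : ℕ, ‖ζ ^ k - 1‖ ≤ ‖ζ - 1‖ := by
    intro k
    have h := geom_sum_mul ζ k
    calc ‖ζ ^ k - 1‖ = ‖∑ i ∈ Finset.range k, ζ ^ i‖ * ‖ζ - 1‖ := by rw [← norm_mul, h]
      _ ≤ 1 * ‖ζ - 1‖ := by
          refine mul_le_mul_of_nonneg_right ?_ (norm_nonneg _)
          exact IsUltrametricDist.norm_sum_le_of_forall_le_of_nonneg zero_le_one
            (fun i _ => le_of_eq (hζknorm i))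
      _ = ‖ζ - 1‖ := one_mul _
  have hpsum : ((p : K)) = ∑ i ∈ Finset.range p, (1 - η ^ i) := by
    rw [Finset.sum_sub_distrib, hgeom, sub_zero, Finset.sum_const, Finset.card_range,
      nsmul_eq_mul, mul_one]
  have hnormp : ‖(p : K)‖ ≤ ‖ζ - 1‖ := by
    rw [hpsum]
    refine IsUltrametricDist.norm_sum_le_of_forall_le_of_nonneg (norm_nonneg _) (fun i _ => ?_)
    rw [hη, ← pow_mul, norm_sub_rev]
    exact hsub (m / p * i)
  have hlow : (l : ℝ)⁻¹ ≤ ‖(p : K)‖ := by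
    rw [show ((p : K)) = algebraMap ℚ_[l] K ((p : ℕ) : ℚ_[l]) by simp, hnorm]
    by_cases hdl : l = p
    · subst hdl
      rw [Padic.norm_p]
    · have h1 : ¬ ((l : ℤ) ∣ (p : ℤ)) := by
        intro hdvd
        exact hdl ((Nat.prime_dvd_prime_iff_eq hl.out hp).mp (Int.ofNat_dvd.mp hdvd))
      have h2 : ¬ (‖((p : ℤ) : ℚ_[l])‖ < 1) := fun h =>
        h1 ((Padic.norm_intCast_lt_one_iff (p := l) (k := (p : ℤ))).mp h)
      push_neg at h2
      have h3 : (l : ℝ)⁻¹ ≤ 1 := by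
        rw [inv_le_one_iff₀]
        right
        exact_mod_cast hl.out.one_lt.le
      calc (l : ℝ)⁻¹ ≤ 1 := h3
        _ ≤ ‖((p : ℤ) : ℚ_[l])‖ := h2
        _ = ‖((p : ℕ) : ℚ_[l])‖ := by norm_cast
  linarith

/-- Let `G` be a compact Hausdorff abelian topological group, `E` a
finite subextension of `Q̄_ℓ/ℚ_ℓ` and `χ : G → O_E^×/μ_E` a continuous
homomorphism.  Then there exist a continuous homomorphism `ξ : G → O_E^×` and an
integer `n ≥ 1` such that the composition of `ξ` with the quotient map
`O_E^× → O_E^×/μ_E` equals `χ^n`. -/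
theorem continuous_char_lifts_power
    {l : ℕ} [Fact l.Prime]
    (K : Type*) [NormedField K] [Algebra ℚ_[l] K] [IsAlgClosure ℚ_[l] K]
    (hnorm : ∀ x : ℚ_[l], ‖algebraMap ℚ_[l] K x‖ = ‖x‖)
    (G : Type*) [CommGroup G] [TopologicalSpace G] [IsTopologicalGroup G]
    [CompactSpace G] [T2Space G]
    (E : IntermediateField ℚ_[l] K) [FiniteDimensional ℚ_[l] E]
    (χ : G →* ↥(unitBall l K E) ⧸ muSub l K E) (hχ : Continuous χ) :
    ∃ (ξ : G →* ↥(unitBall l K E)) (n : ℕ), Continuous ξ ∧ 0 < n ∧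
      ∀ g : G, QuotientGroup.mk' (muSub l K E) (ξ g) = χ g ^ n := by
  classical
  have hlpos : 0 < l := (Fact.out : l.Prime).pos
  have hlpos' : (0:ℝ) < (l : ℝ)⁻¹ := by
    have : (0:ℝ) < l := by exact_mod_cast hlpos
    positivity
  letI : NormedSpace ℚ_[l] K :=
    { norm_smul_le := fun a x => le_of_eq (by rw [Algebra.smul_def, norm_mul, hnorm]) }
  set V : Submodule ℚ_[l] K := Subalgebra.toSubmodule E.toSubalgebra with hV
  haveI : FiniteDimensional ℚ_[l] V := ‹FiniteDimensional ℚ_[l] E›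
  haveI : ProperSpace V := FiniteDimensional.proper ℚ_[l] V
  have hball : IsCompact (Subtype.val '' (Metric.closedBall (0 : V) 1)) :=
    (isCompact_closedBall _ _).image continuous_subtype_val
  have hset : {x : K | x ∈ E ∧ ‖x‖ ≤ 1} ⊆ Subtype.val '' (Metric.closedBall (0 : V) 1) := by
    rintro x ⟨hxE, hx1⟩
    refine ⟨⟨x, ?_⟩, ?_, rfl⟩
    · simpa [hV] using hxE
    · simpa [Metric.mem_closedBall, dist_zero_right] using hx1
  set T : Set K := {x | x ∈ E ∧ ∃ n : ℕ, 0 < n ∧ x ^ n = 1} with hT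
  have hTsub : T ⊆ {x : K | x ∈ E ∧ ‖x‖ ≤ 1} := by
    rintro x ⟨hxE, n, hn, hx⟩
    exact ⟨hxE, le_of_eq (norm_eq_one_of_pow_eq_one' hn hx)⟩
  have hsep : ∀ x ∈ T, ∀ y ∈ T, x ≠ y → (l : ℝ)⁻¹ ≤ dist x y := by
    rintro x ⟨hxE, nx, hnx, hx⟩ y ⟨hyE, ny, hny, hy⟩ hne
    have hy0 : y ≠ 0 := fun h => by simp [h, zero_pow hny.ne'] at hy
    have hynorm : ‖y‖ = 1 := norm_eq_one_of_pow_eq_one' hny hy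
    have hζ1 : x * y⁻¹ ≠ 1 := by
      rw [Ne, mul_inv_eq_one₀ hy0]
      exact hne
    have hζpow : (x * y⁻¹) ^ (nx * ny) = 1 := by
      rw [mul_pow, inv_pow, pow_mul, hx, one_pow, one_mul, mul_comm nx ny, pow_mul, hy,
        one_pow, inv_one]
    have h := aux_sep hnorm hζ1 (Nat.mul_pos hnx hny) hζpow
    have heq : x * y⁻¹ - 1 = (x - y) * y⁻¹ := by field_simp
    rw [heq, norm_mul, norm_inv, hynorm, inv_one, mul_one] at h
    rwa [dist_eq_norm]
  have hTfin : T.Finite := by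
    have htb : TotallyBounded T := (hball.totallyBounded).subset (hTsub.trans hset)
    rw [Metric.totallyBounded_iff] at htb
    obtain ⟨s, hsfin, hcov⟩ := htb ((l : ℝ)⁻¹ / 2) (by positivity)
    have hsub2 : T ⊆ ⋃ y ∈ s, T ∩ Metric.ball y ((l : ℝ)⁻¹ / 2) := by
      intro x hx
      have h := hcov hx
      simp only [Set.mem_iUnion] at h ⊢
      obtain ⟨y, hy, hxy⟩ := h
      exact ⟨y, hy, hx, hxy⟩
    refine Set.Finite.subset (Set.Finite.biUnion hsfin fun y _ => ?_) hsub2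
    apply Set.Subsingleton.finite
    rintro a ⟨haT, hab⟩ b ⟨hbT, hbb⟩
    by_contra hne
    have h1 := hsep a haT b hbT hne
    have h2 : dist a b < (l : ℝ)⁻¹ := by
      calc dist a b ≤ dist a y + dist y b := dist_triangle a y b
        _ < (l : ℝ)⁻¹ / 2 + (l : ℝ)⁻¹ / 2 := by
            refine add_lt_add (Metric.mem_ball.mp hab) ?_
            rw [dist_comm]
            exact Metric.mem_ball.mp hbb
        _ = (l : ℝ)⁻¹ := by ring
    linarith
  haveI hfinT : Finite T := hTfin.to_subtype
  haveI : Finite (muSub l K E) := by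
    have hmem : ∀ x : muSub l K E, (((x : ↥(unitBall l K E)) : Kˣ) : K) ∈ T := by
      rintro ⟨⟨u, hu⟩, hx⟩
      have hx' : ∃ n : ℕ, 0 < n ∧ u ^ n = 1 := hx
      obtain ⟨n, hn, hun⟩ := hx'
      refine ⟨hu.1, n, hn, ?_⟩
      have h := congrArg (Units.val) hun
      simpa using h
    refine Finite.of_injective (fun x : muSub l K E => (⟨_, hmem x⟩ : T)) ?_
    intro a b hab
    have h1 : (((a : ↥(unitBall l K E)) : Kˣ) : K) = (((b : ↥(unitBall l K E)) : Kˣ) : K) :=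
      congrArg Subtype.val hab
    exact Subtype.ext (Subtype.ext (Units.ext h1))
  set N := Nat.card (muSub l K E) with hN
  have hNpos : 0 < N := Nat.card_pos
  have hker : ∀ x ∈ muSub l K E, x ^ N = 1 := by
    intro x hx
    have h2 : ((⟨x, hx⟩ : muSub l K E) ^ N) = 1 := pow_card_eq_one'
    have h3 := congrArg Subtype.val h2
    rw [SubmonoidClass.coe_pow, OneMemClass.coe_one] at h3
    exact h3
  let ψ : (↥(unitBall l K E) ⧸ muSub l K E) →* ↥(unitBall l K E) :=
    QuotientGroup.lift (muSub l K E) (powMonoidHom N) (fun x hx => hker x hx)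
  have hψcont : Continuous ψ := by
    rw [(QuotientGroup.isQuotientMap_mk (muSub l K E)).continuous_iff]
    have h : (ψ ∘ (QuotientGroup.mk : ↥(unitBall l K E) → _)) =
        fun x : ↥(unitBall l K E) => x ^ N := rfl
    rw [h]
    exact continuous_pow N
  refine ⟨ψ.comp χ, N, hψcont.comp hχ, hNpos, fun g => ?_⟩
  obtain ⟨x, hx⟩ := QuotientGroup.mk'_surjective (muSub l K E) (χ g)
  have h1 : ψ (QuotientGroup.mk' (muSub l K E) x) = x ^ N := rfl
  rw [MonoidHom.comp_apply, ← hx, h1, map_pow]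
end

section
/- Let k be a finite field, let (k_j)_{j ∈ J} be a finite family of finite field extensions of k, let F be a field, and for each j ∈ J let χ_j : k_j^× → F^× be a group homomorphism. Assume that for every c ∈ k^× one has ∏_{j ∈ J} χ_j(c) = 1, where c is viewed in k_j^× via the inclusion k ⊆ k_j. Then for any two nontrivial additive characters ψ, ψ' : k → F^×, one has ∏_{j ∈ J} τ_{k_j}(χ_j, ψ ∘ Tr_{k_j/k}) = ∏_{j ∈ J} τ_{k_j}(χ_j, ψ' ∘ Tr_{k_j/k}); that is, the Jacobi sum j_χ = ∏_{j ∈ J} τ_{k_j}(χ_j, ψ ∘ Tr_{k_j/k}) is independent of the choice of the nontrivial additive character ψ. -/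
open AddChar in
lemma addChar_exists_mulShift {k F : Type*} [Field k] [Fintype k] [Field F]
    {ψ ψ' : AddChar k F} (hψ : ψ ≠ 1) (hψ' : ψ' ≠ 1) :
    ∃ b : k, b ≠ 0 ∧ ψ' = ψ.mulShift b := by
  classical
  by_contra h
  push_neg at h
  have hnot : ∀ b : k, ψ' ≠ ψ.mulShift b := by
    intro b
    rcases eq_or_ne b 0 with rfl | hb
    · simpa [AddChar.mulShift_zero] using hψ'
    · exact h b hb
  set f : Option k → (Multiplicative k →* F) :=
    fun o => (o.elim ψ' (ψ.mulShift ·)).toMonoidHom with hf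
  have hinjm : Function.Injective (AddChar.toMonoidHom (A := k) (M := F)) := by
    intro x y hxy
    ext a
    exact DFunLike.congr_fun hxy (Multiplicative.ofAdd a)
  have hprim : ψ.IsPrimitive := AddChar.IsPrimitive.of_ne_one hψ
  have hfinj : Function.Injective f := by
    intro o₁ o₂ hoo
    have : o₁.elim ψ' (ψ.mulShift ·) = o₂.elim ψ' (ψ.mulShift ·) := hinjm hoo
    match o₁, o₂ with
    | none, none => rfl
    | none, some b => exact absurd this (hnot b)
    | some b, none => exact absurd this.symm (hnot b)
    | some b, some c =>
        simp only [Option.elim] at this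
        rw [AddChar.to_mulShift_inj_of_isPrimitive hprim this]
  have hli : LinearIndependent F (fun o => ((f o : Multiplicative k → F))) :=
    (linearIndependent_monoidHom (Multiplicative k) F).comp f hfinj
  have hcard := hli.fintype_card_le_finrank
  rw [Module.finrank_fintype_fun_eq_card] at hcard
  simp [Fintype.card_option, Fintype.card_multiplicative] at hcard

/-- Let `k` be a finite field, `(K j)_{j ∈ J}` a finite family of
finite field extensions of `k`, `F` a field, and `χ j : (K j)ˣ → Fˣ` group
homomorphisms such that `∏ j, χ j (c) = 1` for every `c ∈ kˣ` (viewing `c` in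
`(K j)ˣ` via the inclusion `k ⊆ K j`).  Then for any two nontrivial additive
characters `ψ, ψ' : k → Fˣ`, the products of Gauss sums
`∏ j, τ_{K j}(χ j, ψ ∘ Tr_{K j/k})` and `∏ j, τ_{K j}(χ j, ψ' ∘ Tr_{K j/k})`
agree, where `τ_{k'}(χ, ψ') = -∑_{a ∈ k'ˣ} χ(a)⁻¹ ψ'(a)`; i.e. the Jacobi sum
`j_χ` is independent of the choice of nontrivial additive character. -/
theorem jacobi_sum_indep_of_add_char
    (k : Type*) [Field k] [Fintype k]
    {J : Type*} [Fintype J]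
    (K : J → Type*) [∀ j, Field (K j)] [∀ j, Fintype (K j)] [∀ j, DecidableEq (K j)]
    [∀ j, Algebra k (K j)] [∀ j, FiniteDimensional k (K j)]
    (F : Type*) [Field F]
    (χ : ∀ j, (K j)ˣ →* Fˣ)
    (hχ : ∀ c : kˣ, ∏ j, χ j (Units.map (algebraMap k (K j)).toMonoidHom c) = 1)
    (ψ ψ' : AddChar k F)
    (hψ : ∃ a : k, ψ a ≠ 1) (hψ' : ∃ a : k, ψ' a ≠ 1) :
    ∏ j, (-∑ a : (K j)ˣ, ((χ j a)⁻¹ : Fˣ) *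
        ψ (Algebra.trace k (K j) (a : K j)))
      = ∏ j, (-∑ a : (K j)ˣ, ((χ j a)⁻¹ : Fˣ) *
        ψ' (Algebra.trace k (K j) (a : K j))) := by
  classical
  have hψ1 : ψ ≠ 1 := by
    obtain ⟨a, ha⟩ := hψ
    exact fun h => ha (by rw [h]; rfl)
  have hψ'1 : ψ' ≠ 1 := by
    obtain ⟨a, ha⟩ := hψ'
    exact fun h => ha (by rw [h]; rfl)
  obtain ⟨b, hb, hbb⟩ := addChar_exists_mulShift hψ1 hψ'1
  set bu : kˣ := Units.mk0 b hb with hbu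
  set u : ∀ j, (K j)ˣ := fun j => Units.map (algebraMap k (K j)).toMonoidHom bu with hu
  have key : ∀ j, (-∑ a : (K j)ˣ, ((χ j a)⁻¹ : Fˣ) *
        ψ' (Algebra.trace k (K j) (a : K j)))
      = ((χ j (u j) : Fˣ) : F) * (-∑ a : (K j)ˣ, ((χ j a)⁻¹ : Fˣ) *
        ψ (Algebra.trace k (K j) (a : K j))) := by
    intro j
    have h1 : ∀ a : (K j)ˣ, ψ' (Algebra.trace k (K j) (a : K j))
        = ψ (Algebra.trace k (K j) (((u j) * a : (K j)ˣ) : K j)) := by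
      intro a
      rw [hbb, AddChar.mulShift_apply]
      congr 1
      have h2 : (((u j) * a : (K j)ˣ) : K j) = b • (a : K j) := by
        simp [hu, hbu, Algebra.smul_def]
      rw [h2, map_smul, smul_eq_mul]
    calc (-∑ a : (K j)ˣ, ((χ j a)⁻¹ : Fˣ) * ψ' (Algebra.trace k (K j) (a : K j)))
        = -∑ a : (K j)ˣ, (fun c : (K j)ˣ => ((χ j (u j) : Fˣ) : F) *
            (((χ j c)⁻¹ : Fˣ) : F) * ψ (Algebra.trace k (K j) (c : K j))) ((u j) * a) := by
          congr 1
          refine Finset.sum_congr rfl fun a _ => ?_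
          rw [h1 a]
          have : ((χ j a)⁻¹ : Fˣ) = ((χ j (u j) : Fˣ) : F) * (((χ j ((u j) * a))⁻¹ : Fˣ) : F) := by
            rw [map_mul, mul_inv]
            push_cast
            rw [← mul_assoc, mul_inv_cancel₀ (Units.ne_zero _), one_mul]
          rw [this]
      _ = -∑ c : (K j)ˣ, ((χ j (u j) : Fˣ) : F) *
            (((χ j c)⁻¹ : Fˣ) : F) * ψ (Algebra.trace k (K j) (c : K j)) :=
          congrArg Neg.neg (Fintype.sum_equiv (Equiv.mulLeft (u j)) _ _ (fun a => rfl))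
      _ = ((χ j (u j) : Fˣ) : F) * (-∑ a : (K j)ˣ, ((χ j a)⁻¹ : Fˣ) *
            ψ (Algebra.trace k (K j) (a : K j))) := by
          rw [mul_neg, Finset.mul_sum]
          congr 1
          exact Finset.sum_congr rfl fun a _ => by ring
  symm
  calc ∏ j, (-∑ a : (K j)ˣ, ((χ j a)⁻¹ : Fˣ) * ψ' (Algebra.trace k (K j) (a : K j)))
      = ∏ j, (((χ j (u j) : Fˣ) : F) * (-∑ a : (K j)ˣ, ((χ j a)⁻¹ : Fˣ) *
          ψ (Algebra.trace k (K j) (a : K j)))) := Finset.prod_congr rfl fun j _ => key j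
    _ = (∏ j, ((χ j (u j) : Fˣ) : F)) * ∏ j, (-∑ a : (K j)ˣ, ((χ j a)⁻¹ : Fˣ) *
          ψ (Algebra.trace k (K j) (a : K j))) := Finset.prod_mul_distrib
    _ = ∏ j, (-∑ a : (K j)ˣ, ((χ j a)⁻¹ : Fˣ) *
          ψ (Algebra.trace k (K j) (a : K j))) := by
        have : (∏ j, ((χ j (u j) : Fˣ) : F)) = ((∏ j, χ j (u j) : Fˣ) : F) := by
          push_cast; rfl
        rw [this, hχ bu, Units.val_one, one_mul]
end
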